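/- arXiv:1805.12558 — 3 statements merged into one kernel-verified Lean document; each statement's English description precedes it below -/
import Mathlib

section
/- For every multi-index α ∈ ℕ³ and every t ∈ (0, t₀], the weighted energy E_α(t) := (1/2) ∫_{[0,1]³} [ t^{4/γ} (∂_t∂_x^α ψ)²(t,x) + t^{8/(3γ)} Σ_{i=1}^{3} (∂_{x_i}∂_x^α ψ)²(t,x) ] dx satisfies E_α(t) ≤ E_α(t₀). -/
noncomputable section

open MeasureTheory Filter Set

/-- Spatial partial derivative `∂_{x_i}` in the `i`-th coordinate direction. -/
def pd (i : Fin 3) (f : (Fin 3 → ℝ) → ℝ) (x : Fin 3 → ℝ) : ℝ :=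
  deriv (fun s => f (Function.update x i s)) (x i)

/-- Iterated spatial derivative `∂_x^α` for a multi-index `α ∈ ℕ³`. -/
def pdMulti (α : Fin 3 → ℕ) (f : (Fin 3 → ℝ) → ℝ) : (Fin 3 → ℝ) → ℝ :=
  (pd 0)^[α 0] ((pd 1)^[α 1] ((pd 2)^[α 2] f))

/-- Time derivative `∂_t`. -/
def dtd (ψ : ℝ → (Fin 3 → ℝ) → ℝ) : ℝ → (Fin 3 → ℝ) → ℝ :=
  fun t x => deriv (fun s => ψ s x) t

/-- `ℤ³`-periodicity of a function on `ℝ³`. -/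
def ZPeriodic (f : (Fin 3 → ℝ) → ℝ) : Prop :=
  ∀ (x : Fin 3 → ℝ) (k : Fin 3 → ℤ), f (x + fun i => (k i : ℝ)) = f x

/-- Smoothness of `ψ` on `(0,∞) × ℝ³`. -/
def SmoothOnPos (ψ : ℝ → (Fin 3 → ℝ) → ℝ) : Prop :=
  ContDiffOn ℝ (⊤ : ℕ∞) (fun p : ℝ × (Fin 3 → ℝ) => ψ p.1 p.2)
    {p : ℝ × (Fin 3 → ℝ) | 0 < p.1}

/-- The unit cube `[0,1]³`, a fundamental domain for `𝕋³`. -/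
def cube : Set (Fin 3 → ℝ) := Set.Icc 0 1

/-- The FLRW wave equation `□_g ψ = 0` in coordinates. -/
def FLRWwave (γ : ℝ) (ψ : ℝ → (Fin 3 → ℝ) → ℝ) : Prop :=
  ∀ t : ℝ, 0 < t → ∀ x : Fin 3 → ℝ,
    dtd (dtd ψ) t x + (2 / γ) * t⁻¹ * dtd ψ t x
      - t ^ (-(4 / (3 * γ))) * ∑ i : Fin 3, pd i (pd i (ψ t)) x = 0

/-- The weighted energy `E_α(t)` of a solution on FLRW. -/
def Eflrw (γ : ℝ) (ψ : ℝ → (Fin 3 → ℝ) → ℝ) (α : Fin 3 → ℕ) (t : ℝ) : ℝ :=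
  (1 / 2) * ∫ x in cube,
    (t ^ (4 / γ) * (dtd (fun s => pdMulti α (ψ s)) t x) ^ 2
      + t ^ (8 / (3 * γ)) * ∑ i : Fin 3, (pd i (pdMulti α (ψ t)) x) ^ 2)

abbrev E3 := Fin 3 → ℝ
abbrev Pt := ℝ × E3

def Om : Set Pt := {p : Pt | 0 < p.1}

lemma isOpen_Om : IsOpen Om := isOpen_lt continuous_const continuous_fst

/-- directional derivative of a joint function -/
def Dw (w : Pt) (F : Pt → ℝ) : Pt → ℝ := fun p => fderiv ℝ F p w

def e0 : Pt := (1, 0)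
def ev (i : Fin 3) : Pt := (0, Pi.single i 1)

lemma ContDiffOn.dw {F : Pt → ℝ} (hF : ContDiffOn ℝ (⊤ : ℕ∞) F Om) (w : Pt) :
    ContDiffOn ℝ (⊤ : ℕ∞) (Dw w F) Om := by
  exact ContDiffOn.clm_apply
    (hF.fderiv_of_isOpen (m := (⊤ : ℕ∞)) isOpen_Om (by simp)) contDiffOn_const

lemma dw_symm {F : Pt → ℝ} (hF : ContDiffOn ℝ (⊤ : ℕ∞) F Om) (w w' : Pt) {p : Pt} (hp : p ∈ Om) :
    Dw w (Dw w' F) p = Dw w' (Dw w F) p := by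
  have hdF : ∀ q ∈ Om, DifferentiableAt ℝ F q := fun q hq =>
    (hF.contDiffAt (isOpen_Om.mem_nhds hq)).differentiableAt (by simp)
  have hsymm : IsSymmSndFDerivAt ℝ F p :=
    (hF.contDiffAt (isOpen_Om.mem_nhds hp)).isSymmSndFDerivAt (by rw [minSmoothness_of_isRCLikeNormedField]; exact WithTop.coe_le_coe.2 (le_top : (2 : ℕ∞) ≤ ⊤))
  have hd2 : DifferentiableAt ℝ (fderiv ℝ F) p := by
    exact ((hF.fderiv_of_isOpen (m := (⊤ : ℕ∞)) isOpen_Om (by simp)).contDiffAt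
      (isOpen_Om.mem_nhds hp)).differentiableAt (n := ((⊤ : ℕ∞) : WithTop ℕ∞)) (by simp)
  have key : ∀ u v : Pt, Dw u (Dw v F) p = fderiv ℝ (fderiv ℝ F) p u v := by
    intro u v
    have : Dw v F = fun q => (fderiv ℝ F q) v := rfl
    rw [this]
    show fderiv ℝ (fun q => (fderiv ℝ F q) ((fun _ => v) q)) p u = _
    rw [fderiv_clm_apply hd2 (differentiableAt_const v)]
    simp
  rw [key, key, hsymm.eq]

lemma hasDerivAt_tslice {F : Pt → ℝ} {t : ℝ} {x : E3} (hd : DifferentiableAt ℝ F (t, x)) :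
    HasDerivAt (fun s => F (s, x)) (Dw e0 F (t, x)) t := by
  have hι : HasDerivAt (fun s : ℝ => (s, x)) ((1 : ℝ), (0 : E3)) t :=
    (hasDerivAt_id t).prodMk (hasDerivAt_const t x)
  exact hd.hasFDerivAt.comp_hasDerivAt t hι

lemma hasDerivAt_xslice {F : Pt → ℝ} {t : ℝ} {x : E3} (i : Fin 3)
    (hd : DifferentiableAt ℝ F (t, x)) :
    HasDerivAt (fun s => F (t, Function.update x i s)) (Dw (ev i) F (t, x)) (x i) := by
  have hx : Function.update x i (x i) = x := Function.update_eq_self i x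
  have hι : HasDerivAt (fun s : ℝ => ((t : ℝ), Function.update x i s))
      ((0 : ℝ), (Pi.single i 1 : E3)) (x i) :=
    (hasDerivAt_const (x i) t).prodMk (hasDerivAt_update x i (x i))
  have hdF : HasFDerivAt F (fderiv ℝ F (t, x)) (t, Function.update x i (x i)) := by
    rw [hx]; exact hd.hasFDerivAt
  exact hdF.comp_hasDerivAt (x i) hι

lemma pd_slice {F : Pt → ℝ} {t : ℝ} {x : E3} (i : Fin 3) (hd : DifferentiableAt ℝ F (t, x)) :
    pd i (fun y => F (t, y)) x = Dw (ev i) F (t, x) :=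
  (hasDerivAt_xslice i hd).deriv

lemma deriv_tslice {F : Pt → ℝ} {t : ℝ} {x : E3} (hd : DifferentiableAt ℝ F (t, x)) :
    deriv (fun s => F (s, x)) t = Dw e0 F (t, x) :=
  (hasDerivAt_tslice hd).deriv

lemma diffAt_of_smooth {F : Pt → ℝ} (hF : ContDiffOn ℝ (⊤ : ℕ∞) F Om) {p : Pt} (hp : p ∈ Om) :
    DifferentiableAt ℝ F p :=
  ((hF.contDiffAt (isOpen_Om.mem_nhds hp)).differentiableAt (by simp))

/-- Joint periodicity on the region `Om`. -/
def PerJ (F : Pt → ℝ) : Prop :=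
  ∀ p ∈ Om, ∀ k : Fin 3 → ℤ, F (p.1, p.2 + fun i => (k i : ℝ)) = F p

lemma fderiv_comp_add_const' (F : Pt → ℝ) (c p : Pt) :
    fderiv ℝ (fun q => F (q + c)) p = fderiv ℝ F (p + c) := by
  by_cases hd : DifferentiableAt ℝ F (p + c)
  · have h1 : HasFDerivAt (fun q : Pt => q + c) (ContinuousLinearMap.id ℝ Pt) p :=
      (hasFDerivAt_id p).add_const c
    have h2 := hd.hasFDerivAt.comp p h1
    simpa [Function.comp_def] using h2.fderiv
  · have hd2 : ¬ DifferentiableAt ℝ (fun q => F (q + c)) p := by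
      intro h
      apply hd
      have h1 : DifferentiableAt ℝ (fun q : Pt => q + (-c)) (p + c) :=
        (differentiableAt_id).add_const _
      have h2 : DifferentiableAt ℝ ((fun q => F (q + c)) ∘ fun q : Pt => q + (-c)) (p + c) :=
        DifferentiableAt.comp _ (by simpa using h) h1
      have h3 : ((fun q => F (q + c)) ∘ fun q : Pt => q + (-c)) = F := by
        funext q; simp [Function.comp]
      rwa [h3] at h2
    rw [fderiv_zero_of_not_differentiableAt hd, fderiv_zero_of_not_differentiableAt hd2]

lemma PerJ.dw {F : Pt → ℝ} (hP : PerJ F) (w : Pt) : PerJ (Dw w F) := by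
  intro p hp k
  set c : Pt := ((0 : ℝ), fun i => (k i : ℝ)) with hc
  have hpt : ∀ q : Pt, ((q.1, q.2 + fun i => (k i : ℝ)) : Pt) = q + c := by
    intro q; simp [hc, Prod.ext_iff]
  have he : (fun q => F (q + c)) =ᶠ[nhds p] F := by
    filter_upwards [isOpen_Om.mem_nhds hp] with q hq
    rw [← hpt q]; exact hP q hq k
  show Dw w F (p.1, p.2 + fun i => (k i : ℝ)) = Dw w F p
  rw [hpt p]
  show fderiv ℝ F (p + c) w = fderiv ℝ F p w
  rw [← fderiv_comp_add_const' F c p, he.fderiv_eq]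

lemma pd_eq_fderiv {g : E3 → ℝ} {x : E3} (i : Fin 3) (hd : DifferentiableAt ℝ g x) :
    pd i g x = fderiv ℝ g x (Pi.single i 1) := by
  have hx : Function.update x i (x i) = x := Function.update_eq_self i x
  have hdg : HasFDerivAt g (fderiv ℝ g x) (Function.update x i (x i)) := by
    rw [hx]; exact hd.hasFDerivAt
  exact (hdg.comp_hasDerivAt (x i) (hasDerivAt_update x i (x i))).deriv

lemma setIntegral_sum_pd_eq_zero (f : Fin 3 → E3 → ℝ)
    (hf : ∀ i, ContDiff ℝ (⊤ : ℕ∞) (f i)) (hper : ∀ i, ZPeriodic (f i)) :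
    ∫ x in cube, (∑ i, pd i (f i) x) = 0 := by
  have hle : (0 : E3) ≤ 1 := fun i => by norm_num
  have hcont : ∀ i, Continuous fun x => fderiv ℝ (f i) x (Pi.single i 1) := fun i =>
    ((hf i).continuous_fderiv (by simp)).clm_apply continuous_const
  have key := MeasureTheory.integral_divergence_of_hasFDerivAt_off_countable'
      (a := (0 : E3)) (b := 1) hle f (fun i x => fderiv ℝ (f i) x) ∅ countable_empty
      (fun i => (hf i).continuous.continuousOn)
      (fun x _ i => ((hf i).differentiable (by simp) x).hasFDerivAt)
      ((continuous_finset_sum _ fun i _ => hcont i).continuousOn.integrableOn_compact isCompact_Icc)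
  have hfaces : ∀ i : Fin 3, ∀ x : Fin 2 → ℝ,
      f i (i.insertNth (1 : ℝ) x) = f i (i.insertNth (0 : ℝ) x) := by
    intro i x
    have h1 : i.insertNth (1 : ℝ) x
        = i.insertNth (0 : ℝ) x + fun j => ((Pi.single i 1 : Fin 3 → ℤ) j : ℝ) := by
      funext j
      refine Fin.succAboveCases i ?_ ?_ j
      · simp
      · intro m
        simp [Fin.insertNth_apply_succAbove, Pi.single_eq_of_ne (Fin.succAbove_ne i m)]
    rw [h1, hper i]
  rw [show (∫ x in cube, (∑ i, pd i (f i) x))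
      = ∫ x in Icc (0 : E3) 1, ∑ i, fderiv ℝ (f i) x (Pi.single i 1) from by
    refine setIntegral_congr_fun ?_ fun x _ => ?_
    · exact measurableSet_Icc
    · exact Finset.sum_congr rfl fun i _ =>
        pd_eq_fderiv i ((hf i).differentiable (by simp) x)]
  rw [key]
  refine Finset.sum_eq_zero fun i _ => ?_
  have : ∀ x : Fin 2 → ℝ, f i (i.insertNth ((1 : E3) i) x) = f i (i.insertNth ((0 : E3) i) x) := by
    intro x; simpa using hfaces i x
  simp only [this, sub_self]

/-- Joint form of the wave equation. -/
def WaveJ (γ : ℝ) (G : Pt → ℝ) : Prop :=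
  ∀ p ∈ Om, Dw e0 (Dw e0 G) p + (2 / γ) * p.1⁻¹ * Dw e0 G p
      - p.1 ^ (-(4 / (3 * γ))) * ∑ i : Fin 3, Dw (ev i) (Dw (ev i) G) p = 0

/-- Joint energy density. -/
def eJ (γ : ℝ) (G : Pt → ℝ) : Pt → ℝ := fun p =>
  p.1 ^ (4 / γ) * (Dw e0 G p) ^ 2 + p.1 ^ (8 / (3 * γ)) * ∑ i : Fin 3, (Dw (ev i) G p) ^ 2

/-- Time derivative of the joint energy density. -/
def gJ (γ : ℝ) (G : Pt → ℝ) : Pt → ℝ := fun p =>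
  ((4 / γ * p.1 ^ (4 / γ - 1)) * (Dw e0 G p) ^ 2
    + p.1 ^ (4 / γ) * (2 * Dw e0 G p * Dw e0 (Dw e0 G) p))
    + ((8 / (3 * γ) * p.1 ^ (8 / (3 * γ) - 1)) * ∑ i : Fin 3, (Dw (ev i) G p) ^ 2
    + p.1 ^ (8 / (3 * γ)) * ∑ i : Fin 3, 2 * Dw (ev i) G p * Dw e0 (Dw (ev i) G) p)

lemma slice_contDiff {H : Pt → ℝ} (hH : ContDiffOn ℝ (⊤ : ℕ∞) H Om) {s : ℝ} (hs : 0 < s) :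
    ContDiff ℝ (⊤ : ℕ∞) (fun y => H (s, y)) := by
  rw [← contDiffOn_univ]
  exact hH.comp (contDiff_const.prodMk contDiff_id).contDiffOn (fun y _ => hs)

lemma continuousOn_rpow_fst (c : ℝ) : ContinuousOn (fun p : Pt => p.1 ^ c) Om := by
  intro p hp
  exact ((Real.continuousAt_rpow_const p.1 c (Or.inl (ne_of_gt hp))).comp
    continuousAt_fst).continuousWithinAt

lemma continuousOn_eJ {γ : ℝ} {G : Pt → ℝ} (hG : ContDiffOn ℝ (⊤ : ℕ∞) G Om) :
    ContinuousOn (eJ γ G) Om := by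
  refine ContinuousOn.add (ContinuousOn.mul (continuousOn_rpow_fst _) ?_)
    (ContinuousOn.mul (continuousOn_rpow_fst _) ?_)
  · exact ((hG.dw e0).continuousOn).pow 2
  · exact continuousOn_finset_sum _ fun i _ => ((hG.dw (ev i)).continuousOn).pow 2

lemma continuousOn_gJ {γ : ℝ} {G : Pt → ℝ} (hG : ContDiffOn ℝ (⊤ : ℕ∞) G Om) :
    ContinuousOn (gJ γ G) Om := by
  have hV := (hG.dw e0).continuousOn
  refine ContinuousOn.add (ContinuousOn.add ?_ ?_) (ContinuousOn.add ?_ ?_)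
  · exact (continuousOn_const.mul (continuousOn_rpow_fst _)).mul (hV.pow 2)
  · exact (continuousOn_rpow_fst _).mul
      ((continuousOn_const.mul hV).mul ((hG.dw e0).dw e0).continuousOn)
  · exact (continuousOn_const.mul (continuousOn_rpow_fst _)).mul
      (continuousOn_finset_sum _ fun i _ => ((hG.dw (ev i)).continuousOn).pow 2)
  · exact (continuousOn_rpow_fst _).mul (continuousOn_finset_sum _ fun i _ =>
      (continuousOn_const.mul ((hG.dw (ev i)).continuousOn)).mul
        (((hG.dw (ev i)).dw e0).continuousOn))

lemma hasDerivAt_eJ {γ : ℝ} {G : Pt → ℝ} (hG : ContDiffOn ℝ (⊤ : ℕ∞) G Om)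
    (x : E3) {s : ℝ} (hs : 0 < s) :
    HasDerivAt (fun s' => eJ γ G (s', x)) (gJ γ G (s, x)) s := by
  have hmem : ((s, x) : Pt) ∈ Om := hs
  have h1 : HasDerivAt (fun s' : ℝ => s' ^ (4 / γ)) (4 / γ * s ^ (4 / γ - 1)) s :=
    Real.hasDerivAt_rpow_const (Or.inl hs.ne')
  have h2 : HasDerivAt (fun s' : ℝ => s' ^ (8 / (3 * γ))) (8 / (3 * γ) * s ^ (8 / (3 * γ) - 1)) s :=
    Real.hasDerivAt_rpow_const (Or.inl hs.ne')
  have hV : HasDerivAt (fun s' => Dw e0 G (s', x)) (Dw e0 (Dw e0 G) (s, x)) s :=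
    hasDerivAt_tslice (diffAt_of_smooth (hG.dw e0) hmem)
  have hV2 : HasDerivAt (fun s' => (Dw e0 G (s', x)) ^ 2)
      (2 * Dw e0 G (s, x) * Dw e0 (Dw e0 G) (s, x)) s := by
    simpa using hV.fun_pow 2
  have hW2 : HasDerivAt (fun s' => ∑ i : Fin 3, (Dw (ev i) G (s', x)) ^ 2)
      (∑ i : Fin 3, 2 * Dw (ev i) G (s, x) * Dw e0 (Dw (ev i) G) (s, x)) s := by
    refine HasDerivAt.fun_sum fun i _ => ?_
    have hWi : HasDerivAt (fun s' => Dw (ev i) G (s', x)) (Dw e0 (Dw (ev i) G) (s, x)) s :=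
      hasDerivAt_tslice (diffAt_of_smooth (hG.dw (ev i)) hmem)
    simpa using hWi.fun_pow 2
  exact (h1.mul hV2).add (h2.mul hW2)

lemma gJ_identity {γ : ℝ} (hγ : 0 < γ) {G : Pt → ℝ} (hG : ContDiffOn ℝ (⊤ : ℕ∞) G Om)
    (hW : WaveJ γ G) {s : ℝ} (hs : 0 < s) (x : E3) :
    gJ γ G (s, x) = (8 / (3 * γ) * s ^ (8 / (3 * γ) - 1)) * ∑ i : Fin 3, (Dw (ev i) G (s, x)) ^ 2
      + 2 * s ^ (8 / (3 * γ)) *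
        ∑ i : Fin 3, pd i (fun y => Dw e0 G (s, y) * Dw (ev i) G (s, y)) x := by
  have hmem : ((s, x) : Pt) ∈ Om := hs
  have hVd := diffAt_of_smooth (hG.dw e0) hmem
  -- the divergence term
  have hdiv : ∀ i : Fin 3, pd i (fun y => Dw e0 G (s, y) * Dw (ev i) G (s, y)) x
      = Dw e0 G (s, x) * Dw (ev i) (Dw (ev i) G) (s, x)
        + Dw (ev i) G (s, x) * Dw (ev i) (Dw e0 G) (s, x) := by
    intro i
    have hWd := diffAt_of_smooth (hG.dw (ev i)) hmem
    have h1 : pd i (fun y => Dw e0 G (s, y) * Dw (ev i) G (s, y)) x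
        = Dw (ev i) (fun p => Dw e0 G p * Dw (ev i) G p) (s, x) :=
      pd_slice i (hVd.mul hWd)
    rw [h1]
    show (fderiv ℝ (fun p => Dw e0 G p * Dw (ev i) G p) (s, x)) (ev i) = _
    rw [fderiv_fun_mul hVd hWd]
    simp [Dw]
  -- the wave equation, solved for the second time derivative
  have hA : Dw e0 (Dw e0 G) (s, x)
      = -((2 / γ) * s⁻¹ * Dw e0 G (s, x))
        + s ^ (-(4 / (3 * γ))) * ∑ i : Fin 3, Dw (ev i) (Dw (ev i) G) (s, x) := by
    have := hW (s, x) hmem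
    simp only at this
    linarith [this]
  -- symmetry of second derivatives
  have hsym : ∀ i : Fin 3, Dw e0 (Dw (ev i) G) (s, x) = Dw (ev i) (Dw e0 G) (s, x) :=
    fun i => dw_symm hG e0 (ev i) hmem
  -- rpow arithmetic
  have f1 : s ^ (4 / γ - 1) = s ^ (4 / γ) * s⁻¹ := by
    rw [Real.rpow_sub hs, Real.rpow_one, div_eq_mul_inv]
  have f2 : s ^ (4 / γ) * s ^ (-(4 / (3 * γ))) = s ^ (8 / (3 * γ)) := by
    rw [← Real.rpow_add hs]
    congr 1
    field_simp
    ring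
  simp only [gJ, hdiv]
  rw [Finset.sum_add_distrib, ← Finset.mul_sum]
  simp only [hsym, hA, f1]
  set V := Dw e0 G (s, x)
  set S1 := ∑ i : Fin 3, Dw (ev i) (Dw (ev i) G) (s, x)
  set S2 := ∑ i : Fin 3, Dw (ev i) G (s, x) * Dw (ev i) (Dw e0 G) (s, x)
  set SW := ∑ i : Fin 3, (Dw (ev i) G (s, x)) ^ 2
  have : ∑ i : Fin 3, 2 * Dw (ev i) G (s, x) * Dw (ev i) (Dw e0 G) (s, x) = 2 * S2 := by
    rw [Finset.mul_sum]; exact Finset.sum_congr rfl fun i _ => by ring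
  rw [this]
  linear_combination (2 * V * S1) * f2

lemma cube_eq : cube = Set.Icc (0 : E3) 1 := rfl

lemma setIntegral_gJ_nonneg {γ : ℝ} (hγ : 0 < γ) {G : Pt → ℝ}
    (hG : ContDiffOn ℝ (⊤ : ℕ∞) G Om) (hP : PerJ G) (hW : WaveJ γ G) {s : ℝ} (hs : 0 < s) :
    0 ≤ ∫ x in cube, gJ γ G (s, x) := by
  have hid : ∀ x ∈ cube, gJ γ G (s, x)
      = (8 / (3 * γ) * s ^ (8 / (3 * γ) - 1)) * ∑ i : Fin 3, (Dw (ev i) G (s, x)) ^ 2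
        + 2 * s ^ (8 / (3 * γ)) *
          ∑ i : Fin 3, pd i (fun y => Dw e0 G (s, y) * Dw (ev i) G (s, y)) x :=
    fun x _ => gJ_identity hγ hG hW hs x
  rw [setIntegral_congr_fun (by rw [cube_eq]; exact measurableSet_Icc) hid]
  have hfi : ∀ i : Fin 3, ContDiff ℝ (⊤ : ℕ∞)
      (fun y => Dw e0 G (s, y) * Dw (ev i) G (s, y)) := fun i =>
    ((slice_contDiff (hG.dw e0) hs)).mul (slice_contDiff (hG.dw (ev i)) hs)
  have hfper : ∀ i : Fin 3, ZPeriodic (fun y => Dw e0 G (s, y) * Dw (ev i) G (s, y)) := by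
    intro i x k
    have h1 := (hP.dw e0) (s, x) hs k
    have h2 := (hP.dw (ev i)) (s, x) hs k
    simp only at h1 h2
    show Dw e0 G (s, x + fun j => (k j : ℝ)) * Dw (ev i) G (s, x + fun j => (k j : ℝ))
      = Dw e0 G (s, x) * Dw (ev i) G (s, x)
    rw [h1, h2]
  have hdivzero := setIntegral_sum_pd_eq_zero _ hfi hfper
  have hint1 : IntegrableOn
      (fun x => (8 / (3 * γ) * s ^ (8 / (3 * γ) - 1)) *
        ∑ i : Fin 3, (Dw (ev i) G (s, x)) ^ 2) cube := by
    rw [cube_eq]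
    refine (Continuous.continuousOn ?_).integrableOn_compact isCompact_Icc
    exact continuous_const.mul (continuous_finset_sum _ fun i _ =>
      ((slice_contDiff (hG.dw (ev i)) hs).continuous).pow 2)
  have hint2 : IntegrableOn
      (fun x => 2 * s ^ (8 / (3 * γ)) *
        ∑ i : Fin 3, pd i (fun y => Dw e0 G (s, y) * Dw (ev i) G (s, y)) x) cube := by
    rw [cube_eq]
    refine (Continuous.continuousOn ?_).integrableOn_compact isCompact_Icc
    refine continuous_const.mul (continuous_finset_sum _ fun i _ => ?_)
    have : ∀ y : E3, pd i (fun y' => Dw e0 G (s, y') * Dw (ev i) G (s, y')) y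
        = fderiv ℝ (fun y' => Dw e0 G (s, y') * Dw (ev i) G (s, y')) y (Pi.single i 1) :=
      fun y => pd_eq_fderiv i (((hfi i).differentiable (by simp)) y)
    have heq : (pd i fun y' => Dw e0 G (s, y') * Dw (ev i) G (s, y'))
        = fun y => fderiv ℝ (fun y' => Dw e0 G (s, y') * Dw (ev i) G (s, y')) y (Pi.single i 1) :=
      funext this
    rw [heq]
    exact ((hfi i).continuous_fderiv (by simp)).clm_apply continuous_const
  rw [integral_add hint1 hint2, integral_const_mul, integral_const_mul, hdivzero, mul_zero, add_zero]
  have hms : MeasurableSet cube := by rw [cube_eq]; exact measurableSet_Icc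
  refine mul_nonneg (mul_nonneg (by positivity) (Real.rpow_nonneg hs.le _))
    (setIntegral_nonneg hms fun x _ => Finset.sum_nonneg fun i _ => sq_nonneg _)

lemma energyJ_mono {γ : ℝ} (hγ : 0 < γ) {G : Pt → ℝ}
    (hG : ContDiffOn ℝ (⊤ : ℕ∞) G Om) (hP : PerJ G) (hW : WaveJ γ G)
    {t t₀ : ℝ} (ht : 0 < t) (htt : t ≤ t₀) :
    ∫ x in cube, eJ γ G (t, x) ≤ ∫ x in cube, eJ γ G (t₀, x) := by
  rcases eq_or_lt_of_le htt with rfl | hlt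
  · exact le_refl _
  have ht₀ : 0 < t₀ := ht.trans hlt
  have hms : MeasurableSet cube := by rw [cube_eq]; exact measurableSet_Icc
  -- pointwise FTC in time
  have hFTC : ∀ x : E3, eJ γ G (t₀, x) - eJ γ G (t, x) = ∫ s in Ioc t t₀, gJ γ G (s, x) := by
    intro x
    have hderiv : ∀ s ∈ uIcc t t₀, HasDerivAt (fun s' => eJ γ G (s', x)) (gJ γ G (s, x)) s := by
      intro s hsmem
      rw [uIcc_of_le htt] at hsmem
      exact hasDerivAt_eJ hG x (lt_of_lt_of_le ht hsmem.1)
    have hcont : ContinuousOn (fun s => gJ γ G (s, x)) (uIcc t t₀) := by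
      rw [uIcc_of_le htt]
      refine ((continuousOn_gJ hG).comp (Continuous.continuousOn (by continuity)) ?_)
      intro s hsmem
      exact lt_of_lt_of_le ht hsmem.1
    have h1 := intervalIntegral.integral_eq_sub_of_hasDerivAt hderiv
      (hcont.intervalIntegrable)
    rw [← h1, intervalIntegral.integral_of_le htt]
  -- integrability of energy densities at fixed times
  have hInt : ∀ s : ℝ, 0 < s → IntegrableOn (fun x => eJ γ G (s, x)) cube := by
    intro s hs
    rw [cube_eq]
    refine (ContinuousOn.integrableOn_compact isCompact_Icc ?_)
    refine ((continuousOn_eJ hG).comp (Continuous.continuousOn (by continuity)) ?_).mono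
      (subset_univ _) |>.mono (Set.Subset.refl _)
    intro y _
    exact hs
  -- Fubini integrand integrability
  have hgint : Integrable (Function.uncurry fun x s => gJ γ G (s, x))
      ((volume.restrict cube).prod (volume.restrict (Ioc t t₀))) := by
    rw [Measure.prod_restrict]
    refine IntegrableOn.mono_set ?_ (Set.prod_mono (Set.Subset.refl _) Ioc_subset_Icc_self)
    rw [cube_eq]
    refine ContinuousOn.integrableOn_compact (isCompact_Icc.prod isCompact_Icc) ?_
    refine (continuousOn_gJ hG).comp (Continuous.continuousOn (by continuity)) ?_
    rintro ⟨x, s⟩ ⟨-, hs1, -⟩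
    exact lt_of_lt_of_le ht hs1
  -- conclude
  have hdiff : 0 ≤ ∫ x in cube, (eJ γ G (t₀, x) - eJ γ G (t, x)) := by
    have hswap := MeasureTheory.integral_integral_swap hgint
    calc (0 : ℝ) ≤ ∫ s in Ioc t t₀, ∫ x in cube, gJ γ G (s, x) := by
          refine setIntegral_nonneg measurableSet_Ioc fun s hsmem => ?_
          exact setIntegral_gJ_nonneg hγ hG hP hW (ht.trans hsmem.1)
      _ = ∫ x in cube, ∫ s in Ioc t t₀, gJ γ G (s, x) := hswap.symm
      _ = ∫ x in cube, (eJ γ G (t₀, x) - eJ γ G (t, x)) := by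
          refine setIntegral_congr_fun hms fun x _ => ?_
          exact (hFTC x).symm
  have hsplit := integral_sub ((hInt t₀ ht₀)) ((hInt t ht))
  rw [hsplit] at hdiff
  linarith

lemma dw_congr_on {F₁ F₂ : Pt → ℝ} (h : ∀ q ∈ Om, F₁ q = F₂ q) {p : Pt} (hp : p ∈ Om)
    (w : Pt) : Dw w F₁ p = Dw w F₂ p := by
  have he : F₁ =ᶠ[nhds p] F₂ := by
    filter_upwards [isOpen_Om.mem_nhds hp] with q hq; exact h q hq
  show fderiv ℝ F₁ p w = fderiv ℝ F₂ p w
  rw [he.fderiv_eq]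

lemma hasDerivAt_line {X : Pt → ℝ} {p : Pt} (w : Pt) (hd : DifferentiableAt ℝ X p) :
    HasDerivAt (fun r : ℝ => X (p + r • w)) (Dw w X p) 0 := by
  have hline : HasDerivAt (fun r : ℝ => p + r • w) w 0 := by
    simpa using ((hasDerivAt_id (0 : ℝ)).smul_const w).const_add p
  have hdF : HasFDerivAt X (fderiv ℝ X p) (p + (0 : ℝ) • w) := by
    simpa using hd.hasFDerivAt
  exact hdF.comp_hasDerivAt 0 hline

lemma waveJ_dw {γ : ℝ} {G : Pt → ℝ} (hG : ContDiffOn ℝ (⊤ : ℕ∞) G Om)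
    (hW : WaveJ γ G) (j : Fin 3) : WaveJ γ (Dw (ev j) G) := by
  intro p hp
  have hline : ∀ r : ℝ, p + r • ev j ∈ Om := by
    intro r
    show 0 < (p + r • ev j).1
    rw [show (p + r • ev j).1 = p.1 by simp [ev]]
    exact hp
  have hfst : ∀ r : ℝ, (p + r • ev j).1 = p.1 := by intro r; simp [ev]
  have hzero : ∀ r : ℝ, Dw e0 (Dw e0 G) (p + r • ev j)
      + (2 / γ) * p.1⁻¹ * Dw e0 G (p + r • ev j)
      - p.1 ^ (-(4 / (3 * γ))) *
        ∑ i : Fin 3, Dw (ev i) (Dw (ev i) G) (p + r • ev j) = 0 := by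
    intro r
    have := hW (p + r • ev j) (hline r)
    rwa [hfst r] at this
  have hA := hasDerivAt_line (X := Dw e0 (Dw e0 G)) (p := p) (ev j)
    (diffAt_of_smooth ((hG.dw e0).dw e0) hp)
  have hB := hasDerivAt_line (X := Dw e0 G) (p := p) (ev j)
    (diffAt_of_smooth (hG.dw e0) hp)
  have hC : HasDerivAt (fun r : ℝ => ∑ i : Fin 3, Dw (ev i) (Dw (ev i) G) (p + r • ev j))
      (∑ i : Fin 3, Dw (ev j) (Dw (ev i) (Dw (ev i) G)) p) 0 :=
    HasDerivAt.fun_sum fun i _ => hasDerivAt_line (ev j)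
      (diffAt_of_smooth ((hG.dw (ev i)).dw (ev i)) hp)
  have hcomb := (hA.add (hB.const_mul ((2 / γ) * p.1⁻¹))).sub
    (hC.const_mul (p.1 ^ (-(4 / (3 * γ)))))
  have hfun : (fun r : ℝ => Dw e0 (Dw e0 G) (p + r • ev j)
      + (2 / γ) * p.1⁻¹ * Dw e0 G (p + r • ev j)
      - p.1 ^ (-(4 / (3 * γ))) *
        ∑ i : Fin 3, Dw (ev i) (Dw (ev i) G) (p + r • ev j)) = fun _ => (0 : ℝ) :=
    funext hzero
  rw [show (((fun r : ℝ => Dw e0 (Dw e0 G) (p + r • ev j)) + fun y => 2 / γ * p.1⁻¹ * Dw e0 G (p + y • ev j)) - fun y => p.1 ^ (-(4 / (3 * γ))) * ∑ i : Fin 3, Dw (ev i) (Dw (ev i) G) (p + y • ev j)) = fun _ => (0 : ℝ) from hfun] at hcomb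
  have hkey : Dw (ev j) (Dw e0 (Dw e0 G)) p
      + (2 / γ) * p.1⁻¹ * Dw (ev j) (Dw e0 G) p
      - p.1 ^ (-(4 / (3 * γ))) * ∑ i : Fin 3, Dw (ev j) (Dw (ev i) (Dw (ev i) G)) p = 0 := by
    have := hcomb.unique (hasDerivAt_const 0 0)
    linarith [this]
  -- now commute derivatives
  have e1 : Dw e0 (Dw e0 (Dw (ev j) G)) p = Dw (ev j) (Dw e0 (Dw e0 G)) p := by
    rw [dw_congr_on (fun q hq => dw_symm hG e0 (ev j) hq) hp e0]
    exact dw_symm (hG.dw e0) e0 (ev j) hp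
  have e2 : Dw e0 (Dw (ev j) G) p = Dw (ev j) (Dw e0 G) p := dw_symm hG e0 (ev j) hp
  have e3 : ∀ i : Fin 3, Dw (ev i) (Dw (ev i) (Dw (ev j) G)) p
      = Dw (ev j) (Dw (ev i) (Dw (ev i) G)) p := by
    intro i
    rw [dw_congr_on (fun q hq => dw_symm hG (ev i) (ev j) hq) hp (ev i)]
    exact dw_symm (hG.dw (ev i)) (ev i) (ev j) hp
  rw [e1, e2]
  rw [Finset.sum_congr rfl fun i _ => e3 i]
  exact hkey

def Dstack (α : Fin 3 → ℕ) (F : Pt → ℝ) : Pt → ℝ :=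
  (Dw (ev 0))^[α 0] ((Dw (ev 1))^[α 1] ((Dw (ev 2))^[α 2] F))

lemma dw_iter_smooth {F : Pt → ℝ} (hF : ContDiffOn ℝ (⊤ : ℕ∞) F Om) (w : Pt) (n : ℕ) :
    ContDiffOn ℝ (⊤ : ℕ∞) ((Dw w)^[n] F) Om := by
  induction n with
  | zero => simpa using hF
  | succ n ih => rw [Function.iterate_succ_apply']; exact ih.dw w

lemma dw_iter_per {F : Pt → ℝ} (hP : PerJ F) (w : Pt) (n : ℕ) : PerJ ((Dw w)^[n] F) := by
  induction n with
  | zero => simpa using hP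
  | succ n ih => rw [Function.iterate_succ_apply']; exact ih.dw w

lemma dw_iter_wave {γ : ℝ} {F : Pt → ℝ} (hF : ContDiffOn ℝ (⊤ : ℕ∞) F Om)
    (hW : WaveJ γ F) (j : Fin 3) (n : ℕ) : WaveJ γ ((Dw (ev j))^[n] F) := by
  induction n with
  | zero => simpa using hW
  | succ n ih =>
      rw [Function.iterate_succ_apply']
      exact waveJ_dw (dw_iter_smooth hF (ev j) n) ih j

lemma dstack_smooth {F : Pt → ℝ} (hF : ContDiffOn ℝ (⊤ : ℕ∞) F Om) (α : Fin 3 → ℕ) :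
    ContDiffOn ℝ (⊤ : ℕ∞) (Dstack α F) Om :=
  dw_iter_smooth (dw_iter_smooth (dw_iter_smooth hF _ _) _ _) _ _

lemma dstack_per {F : Pt → ℝ} (hP : PerJ F) (α : Fin 3 → ℕ) : PerJ (Dstack α F) :=
  dw_iter_per (dw_iter_per (dw_iter_per hP _ _) _ _) _ _

lemma dstack_wave {γ : ℝ} {F : Pt → ℝ} (hF : ContDiffOn ℝ (⊤ : ℕ∞) F Om)
    (hW : WaveJ γ F) (α : Fin 3 → ℕ) : WaveJ γ (Dstack α F) :=
  dw_iter_wave (dw_iter_smooth (dw_iter_smooth hF _ _) _ _)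
    (dw_iter_wave (dw_iter_smooth hF _ _) (dw_iter_wave hF hW _ _) _ _) _ _

lemma pd_iter_slice {F : Pt → ℝ} (hF : ContDiffOn ℝ (⊤ : ℕ∞) F Om) {t : ℝ} (ht : 0 < t)
    (i : Fin 3) (n : ℕ) :
    (pd i)^[n] (fun y => F (t, y)) = fun x => (Dw (ev i))^[n] F (t, x) := by
  induction n with
  | zero => rfl
  | succ n ih =>
      rw [Function.iterate_succ_apply', Function.iterate_succ_apply', ih]
      exact funext fun x => pd_slice i
        (diffAt_of_smooth (dw_iter_smooth hF (ev i) n) (by exact ht))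

lemma pdMulti_slice {F : Pt → ℝ} (hF : ContDiffOn ℝ (⊤ : ℕ∞) F Om) {t : ℝ} (ht : 0 < t)
    (α : Fin 3 → ℕ) :
    pdMulti α (fun y => F (t, y)) = fun x => Dstack α F (t, x) := by
  unfold pdMulti Dstack
  rw [pd_iter_slice hF ht 2 (α 2), pd_iter_slice (dw_iter_smooth hF _ _) ht 1 (α 1),
    pd_iter_slice (dw_iter_smooth (dw_iter_smooth hF _ _) _ _) ht 0 (α 0)]

lemma waveJ_of_flrw {γ : ℝ} {ψ : ℝ → E3 → ℝ} (hs : SmoothOnPos ψ)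
    (hw : FLRWwave γ ψ) : WaveJ γ (fun p : Pt => ψ p.1 p.2) := by
  set F : Pt → ℝ := fun p : Pt => ψ p.1 p.2 with hFdef
  have hFs : ContDiffOn ℝ (⊤ : ℕ∞) F Om := hs
  rintro ⟨t, x⟩ hp
  have ht : (0 : ℝ) < t := hp
  have h := hw t ht x
  have h1 : ∀ s : ℝ, 0 < s → ∀ y : E3, dtd ψ s y = Dw e0 F (s, y) := by
    intro s hsp y
    exact deriv_tslice (diffAt_of_smooth hFs (by exact hsp))
  have h2 : dtd (dtd ψ) t x = Dw e0 (Dw e0 F) (t, x) := by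
    show deriv (fun s => dtd ψ s x) t = _
    have he : (fun s => dtd ψ s x) =ᶠ[nhds t] fun s => Dw e0 F (s, x) := by
      filter_upwards [isOpen_Ioi.mem_nhds (show t ∈ Ioi (0:ℝ) from ht)] with s hsp
      exact h1 s hsp x
    rw [he.deriv_eq]
    exact deriv_tslice (diffAt_of_smooth (hFs.dw e0) (by exact ht))
  have h3 : ∀ i : Fin 3, pd i (pd i (ψ t)) x = Dw (ev i) (Dw (ev i) F) (t, x) := by
    intro i
    have hfun : pd i (ψ t) = fun y => Dw (ev i) F (t, y) :=
      funext fun y => pd_slice i (diffAt_of_smooth hFs (by exact ht))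
    rw [hfun]
    exact pd_slice i (diffAt_of_smooth (hFs.dw (ev i)) (by exact ht))
  rw [h2, h1 t ht x] at h
  rw [show ∑ i : Fin 3, pd i (pd i (ψ t)) x
      = ∑ i : Fin 3, Dw (ev i) (Dw (ev i) F) (t, x) from
    Finset.sum_congr rfl fun i _ => h3 i] at h
  exact h

lemma Eflrw_eq {γ : ℝ} {ψ : ℝ → E3 → ℝ} (hs : SmoothOnPos ψ) (α : Fin 3 → ℕ)
    {t : ℝ} (ht : 0 < t) :
    Eflrw γ ψ α t = (1 / 2) * ∫ x in cube, eJ γ (Dstack α (fun p : Pt => ψ p.1 p.2)) (t, x) := by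
  set F : Pt → ℝ := fun p : Pt => ψ p.1 p.2 with hFdef
  have hFs : ContDiffOn ℝ (⊤ : ℕ∞) F Om := hs
  set G : Pt → ℝ := Dstack α F with hGdef
  have hGs : ContDiffOn ℝ (⊤ : ℕ∞) G Om := dstack_smooth hFs α
  have hslice : ∀ s : ℝ, 0 < s → pdMulti α (ψ s) = fun x => G (s, x) := fun s hsp =>
    pdMulti_slice hFs hsp α
  have hms : MeasurableSet cube := by rw [cube_eq]; exact measurableSet_Icc
  unfold Eflrw
  congr 1
  refine setIntegral_congr_fun hms fun x _ => ?_
  have h1 : dtd (fun s => pdMulti α (ψ s)) t x = Dw e0 G (t, x) := by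
    show deriv (fun s => pdMulti α (ψ s) x) t = _
    have he : (fun s => pdMulti α (ψ s) x) =ᶠ[nhds t] fun s => G (s, x) := by
      filter_upwards [isOpen_Ioi.mem_nhds (show t ∈ Ioi (0:ℝ) from ht)] with s hsp
      rw [hslice s hsp]
    rw [he.deriv_eq]
    exact deriv_tslice (diffAt_of_smooth hGs (by exact ht))
  have h2 : ∀ i : Fin 3, pd i (pdMulti α (ψ t)) x = Dw (ev i) G (t, x) := by
    intro i
    rw [hslice t ht]
    exact pd_slice i (diffAt_of_smooth hGs (by exact ht))
  rw [h1]
  simp only [h2]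
  rfl

/-- **Proposition 1, energy estimate (FLRW).** The weighted energies are monotone:
`E_α(t) ≤ E_α(t₀)` for all `0 < t ≤ t₀` and every multi-index `α`. -/
theorem flrw_energy_estimate
    (γ t₀ : ℝ) (hγ1 : 2 / 3 < γ) (hγ2 : γ < 2) (ht₀ : 0 < t₀)
    (ψ : ℝ → (Fin 3 → ℝ) → ℝ)
    (hsmooth : SmoothOnPos ψ)
    (hper : ∀ t : ℝ, 0 < t → ZPeriodic (ψ t))
    (hwave : FLRWwave γ ψ) :
    ∀ α : Fin 3 → ℕ, ∀ t ∈ Set.Ioc (0 : ℝ) t₀, Eflrw γ ψ α t ≤ Eflrw γ ψ α t₀ := by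
  intro α t htmem
  obtain ⟨ht, htt⟩ := htmem
  have hγ0 : (0 : ℝ) < γ := lt_trans (by norm_num) hγ1
  set F : Pt → ℝ := fun p : Pt => ψ p.1 p.2 with hFdef
  have hFs : ContDiffOn ℝ (⊤ : ℕ∞) F Om := hsmooth
  have hFper : PerJ F := fun p hp k => hper p.1 hp p.2 k
  have hFwave : WaveJ γ F := waveJ_of_flrw hsmooth hwave
  have hGs : ContDiffOn ℝ (⊤ : ℕ∞) (Dstack α F) Om := dstack_smooth hFs α
  have hGper : PerJ (Dstack α F) := dstack_per hFper α
  have hGwave : WaveJ γ (Dstack α F) := dstack_wave hFs hFwave α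
  rw [Eflrw_eq hsmooth α ht, Eflrw_eq hsmooth α ht₀]
  have hmono := energyJ_mono hγ0 hGs hGper hGwave ht htt
  linarith
end
end

section
/- Assume in addition 2/3 < γ ≤ 4/3. Let φ(t,x) := t^{2/γ−1} ψ(t,x) be the renormalized solution. Then for every multi-index α ∈ ℕ³ and every t ∈ (0, t₀], the renormalized energy G_α(t) := (1/2) ∫_{[0,1]³} [ t^{4/(3γ)} (∂_t∂_x^α φ)²(t,x) + Σ_{i=1}^{3} (∂_{x_i}∂_x^α φ)²(t,x) ] dx satisfies G_α(t) ≤ G_α(t₀). -/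
noncomputable section

open MeasureTheory Filter Set

/-- The renormalized energy `G_α(t)` of `φ = t^{2/γ−1}ψ` (softest region `2/3 < γ ≤ 4/3`). -/
def Gren (γ : ℝ) (φ : ℝ → (Fin 3 → ℝ) → ℝ) (α : Fin 3 → ℕ) (t : ℝ) : ℝ :=
  (1 / 2) * ∫ x in cube,
    (t ^ (4 / (3 * γ)) * (dtd (fun s => pdMulti α (φ s)) t x) ^ 2
      + ∑ i : Fin 3, (pd i (pdMulti α (φ t)) x) ^ 2)

abbrev P3 := ℝ × (Fin 3 → ℝ)

def Upos : Set P3 := {p | 0 < p.1}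

lemma isOpen_Upos : IsOpen Upos := isOpen_lt continuous_const continuous_fst

def Dv (v : P3) (F : P3 → ℝ) : P3 → ℝ := fun p => fderiv ℝ F p v

lemma update_eq_line (x : Fin 3 → ℝ) (i : Fin 3) (s : ℝ) :
    Function.update x i s = x + (s - x i) • (Pi.single i 1 : Fin 3 → ℝ) := by
  funext j
  rcases eq_or_ne j i with rfl | h
  · simp
  · simp [Function.update_of_ne h, Pi.single_eq_of_ne h]

lemma hasDerivAt_update3 (x : Fin 3 → ℝ) (i : Fin 3) (s : ℝ) :
    HasDerivAt (fun s => Function.update x i s) (Pi.single i 1 : Fin 3 → ℝ) s := by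
  have h : (fun s => Function.update x i s)
      = fun s => x + (s - x i) • (Pi.single i 1 : Fin 3 → ℝ) := by
    funext s; exact update_eq_line x i s
  rw [h]
  simpa using
    (((hasDerivAt_id s).sub_const (x i)).smul_const ((Pi.single i 1 : Fin 3 → ℝ))).const_add x

lemma pd_eq_fderiv_s9 {f : (Fin 3 → ℝ) → ℝ} {x : Fin 3 → ℝ} {L : (Fin 3 → ℝ) →L[ℝ] ℝ}
    (h : HasFDerivAt f L x) (i : Fin 3) : pd i f x = L (Pi.single i 1) := by
  have h2 : HasFDerivAt f L (Function.update x i (x i)) := by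
    rwa [Function.update_eq_self]
  exact (h2.comp_hasDerivAt (x i) (hasDerivAt_update3 x i (x i))).deriv

lemma hasDerivAt_slice_t {F : P3 → ℝ} {t : ℝ} {x : Fin 3 → ℝ} {L : P3 →L[ℝ] ℝ}
    (h : HasFDerivAt F L (t, x)) :
    HasDerivAt (fun s => F (s, x)) (L (1, 0)) t := by
  have hg : HasDerivAt (fun s : ℝ => ((s, x) : P3)) ((1 : ℝ), (0 : Fin 3 → ℝ)) t :=
    (hasDerivAt_id t).prodMk (hasDerivAt_const t x)
  exact h.comp_hasDerivAt t hg

lemma hasDerivAt_slice_x {F : P3 → ℝ} {t : ℝ} {x : Fin 3 → ℝ} {L : P3 →L[ℝ] ℝ}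
    (h : HasFDerivAt F L (t, x)) (i : Fin 3) :
    HasDerivAt (fun s => F (t, Function.update x i s)) (L (0, Pi.single i 1)) (x i) := by
  have h2 : HasFDerivAt F L (t, Function.update x i (x i)) := by
    rwa [Function.update_eq_self]
  have hg : HasDerivAt (fun s : ℝ => ((t, Function.update x i s) : P3))
      ((0 : ℝ), (Pi.single i 1 : Fin 3 → ℝ)) (x i) :=
    (hasDerivAt_const (x i) t).prodMk (hasDerivAt_update3 x i (x i))
  exact h2.comp_hasDerivAt (x i) hg

lemma smoothU_hasFDerivAt {F : P3 → ℝ} (hF : ContDiffOn ℝ (⊤ : ℕ∞) F Upos) {p : P3}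
    (hp : p ∈ Upos) : HasFDerivAt F (fderiv ℝ F p) p :=
  ((hF.contDiffAt (isOpen_Upos.mem_nhds hp)).differentiableAt
    (by simp)).hasFDerivAt

lemma smoothU_fderiv {F : P3 → ℝ} (hF : ContDiffOn ℝ (⊤ : ℕ∞) F Upos) :
    ContDiffOn ℝ (⊤ : ℕ∞) (fderiv ℝ F) Upos :=
  hF.fderiv_of_isOpen isOpen_Upos (by exact_mod_cast le_refl _)

lemma smoothU_Dv {F : P3 → ℝ} (hF : ContDiffOn ℝ (⊤ : ℕ∞) F Upos) (v : P3) :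
    ContDiffOn ℝ (⊤ : ℕ∞) (Dv v F) Upos :=
  (ContinuousLinearMap.apply ℝ ℝ v).contDiff.comp_contDiffOn (smoothU_fderiv hF)

lemma pd_slice_s9 {F : P3 → ℝ} (hF : ContDiffOn ℝ (⊤ : ℕ∞) F Upos) {t : ℝ} (ht : 0 < t)
    (x : Fin 3 → ℝ) (i : Fin 3) :
    pd i (fun y => F (t, y)) x = Dv (0, Pi.single i 1) F (t, x) := by
  have h := smoothU_hasFDerivAt hF (p := (t, x)) ht
  have := (hasDerivAt_slice_x h i).deriv
  simpa [pd, Dv] using this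

lemma dtd_slice {F : P3 → ℝ} (hF : ContDiffOn ℝ (⊤ : ℕ∞) F Upos) {t : ℝ} (ht : 0 < t)
    (x : Fin 3 → ℝ) :
    deriv (fun s => F (s, x)) t = Dv (1, 0) F (t, x) := by
  have h := smoothU_hasFDerivAt hF (p := (t, x)) ht
  exact (hasDerivAt_slice_t h).deriv


lemma smoothU_differentiableAt {F : P3 → ℝ} (hF : ContDiffOn ℝ (⊤ : ℕ∞) F Upos) {p : P3}
    (hp : p ∈ Upos) : DifferentiableAt ℝ F p :=
  (hF.contDiffAt (isOpen_Upos.mem_nhds hp)).differentiableAt (by simp)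

lemma Dv_comm {F : P3 → ℝ} (hF : ContDiffOn ℝ (⊤ : ℕ∞) F Upos) {p : P3}
    (hp : p ∈ Upos) (v w : P3) : Dv w (Dv v F) p = Dv v (Dv w F) p := by
  set F' := fderiv ℝ F with hF'
  have hd : DifferentiableAt ℝ F' p := by
    apply ((smoothU_fderiv hF).contDiffAt (isOpen_Upos.mem_nhds hp)).differentiableAt
    simp
  have hev : ∀ᶠ y in nhds p, HasFDerivAt F (F' y) y := by
    filter_upwards [isOpen_Upos.mem_nhds hp] with y hy
    exact smoothU_hasFDerivAt hF hy
  have hsym := second_derivative_symmetric_of_eventually hev hd.hasFDerivAt v w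
  have key : ∀ u z : P3, Dv z (Dv u F) p = fderiv ℝ F' p z u := by
    intro u z
    have h1 : HasFDerivAt (Dv u F)
        ((ContinuousLinearMap.apply ℝ ℝ u).comp (fderiv ℝ F' p)) p :=
      (ContinuousLinearMap.apply ℝ ℝ u).hasFDerivAt.comp p hd.hasFDerivAt
    have := h1.fderiv
    simp only [Dv, this]
    rfl
  rw [key v w, key w v, hsym]

lemma Dv_congr_on {G H : P3 → ℝ} (h : ∀ q ∈ Upos, G q = H q) {p : P3} (hp : p ∈ Upos)
    (u : P3) : Dv u G p = Dv u H p := by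
  have hev : G =ᶠ[nhds p] H := by
    filter_upwards [isOpen_Upos.mem_nhds hp] with q hq using h q hq
  simp only [Dv, hev.fderiv_eq]

lemma Dv_periodic {F : P3 → ℝ} (hF : ContDiffOn ℝ (⊤ : ℕ∞) F Upos)
    (hper : ∀ t : ℝ, 0 < t → ZPeriodic (fun x => F (t, x))) (v : P3) :
    ∀ t : ℝ, 0 < t → ZPeriodic (fun x => Dv v F (t, x)) := by
  intro t ht x k
  set c : P3 := (0, fun i => (k i : ℝ)) with hc
  set p : P3 := (t, x) with hp
  have hpU : p ∈ Upos := ht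
  have hpcU : p + c ∈ Upos := by
    simpa [Upos, hp, hc] using ht
  have h1 : HasFDerivAt (fun q => F (q + c)) (fderiv ℝ F (p + c)) p := by
    have := (smoothU_hasFDerivAt hF hpcU).comp p ((hasFDerivAt_id p).add_const c)
    simpa [Function.comp_def] using this
  have h2 : (fun q => F (q + c)) =ᶠ[nhds p] F := by
    filter_upwards [isOpen_Upos.mem_nhds hpU] with q hq
    have : q + c = (q.1, q.2 + fun i => (k i : ℝ)) := by
      apply Prod.ext <;> simp [hc]
    rw [this]
    exact hper q.1 hq q.2 k
  have h3 : HasFDerivAt F (fderiv ℝ F (p + c)) p := h1.congr_of_eventuallyEq h2.symm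
  have h4 : (t, x + fun i => (k i : ℝ)) = p + c := by
    apply Prod.ext <;> simp [hc, hp]
  simp only [Dv, h4, ← hp, h3.fderiv]

lemma Dv_sum {G : Fin 3 → P3 → ℝ} (hG : ∀ j, DifferentiableAt ℝ (G j) p) (u : P3) :
    Dv u (fun q => ∑ j : Fin 3, G j q) p = ∑ j : Fin 3, Dv u (G j) p := by
  simp only [Dv]
  rw [fderiv_fun_sum (fun j _ => hG j)]
  simp

/-- The abstract wave structure we propagate. -/
structure GoodWave (a b : ℝ) (F : P3 → ℝ) : Prop where
  smooth : ContDiffOn ℝ (⊤ : ℕ∞) F Upos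
  periodic : ∀ t : ℝ, 0 < t → ZPeriodic (fun x => F (t, x))
  wave : ∀ p : P3, p ∈ Upos →
    Dv (1, 0) (Dv (1, 0) F) p + b * p.1⁻¹ * Dv (1, 0) F p
      - p.1 ^ (-a) * ∑ i : Fin 3, Dv (0, Pi.single i 1) (Dv (0, Pi.single i 1) F) p = 0


lemma GoodWave.pdDv {a b : ℝ} {F : P3 → ℝ} (h : GoodWave a b F) (i : Fin 3) :
    GoodWave a b (Dv (0, Pi.single i 1) F) := by
  set ei : P3 := (0, Pi.single i 1) with hei
  refine ⟨smoothU_Dv h.smooth ei, Dv_periodic h.smooth h.periodic ei, ?_⟩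
  intro p hp
  have ht : 0 < p.1 := hp
  set B : P3 → ℝ := Dv (1, 0) F with hB
  set A : P3 → ℝ := Dv (1, 0) B with hA
  set S : P3 → ℝ := fun q => ∑ j : Fin 3, Dv (0, Pi.single j 1) (Dv (0, Pi.single j 1) F) q
    with hS
  set H : P3 → ℝ := fun q => A q + b * q.1⁻¹ * B q - q.1 ^ (-a) * S q with hH
  have hH0 : ∀ q ∈ Upos, H q = (fun _ => (0:ℝ)) q := fun q hq => h.wave q hq
  have hDH0 : Dv ei H p = 0 := by
    rw [Dv_congr_on hH0 hp ei]
    simp [Dv]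
  have hdB : DifferentiableAt ℝ B p := smoothU_differentiableAt (smoothU_Dv h.smooth _) hp
  have hdA : DifferentiableAt ℝ A p :=
    smoothU_differentiableAt (smoothU_Dv (smoothU_Dv h.smooth _) _) hp
  have hdSj : ∀ j : Fin 3,
      DifferentiableAt ℝ (Dv (0, Pi.single j 1) (Dv (0, Pi.single j 1) F)) p := fun j =>
    smoothU_differentiableAt (smoothU_Dv (smoothU_Dv h.smooth _) _) hp
  have hdS : DifferentiableAt ℝ S p := by
    apply DifferentiableAt.fun_sum
    exact fun j _ => hdSj j
  have hfst : HasFDerivAt (fun q : P3 => q.1) (ContinuousLinearMap.fst ℝ ℝ (Fin 3 → ℝ)) p :=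
    hasFDerivAt_fst
  have hC : HasFDerivAt (fun q : P3 => q.1⁻¹)
      (-((p.1 ^ 2)⁻¹ • ContinuousLinearMap.fst ℝ ℝ (Fin 3 → ℝ))) p := by
    have := (hasDerivAt_inv (ne_of_gt ht)).comp_hasFDerivAt p hfst
    simpa [Function.comp_def] using this
  have hR : HasFDerivAt (fun q : P3 => q.1 ^ (-a))
      (-((a * p.1 ^ (-a - 1)) • ContinuousLinearMap.fst ℝ ℝ (Fin 3 → ℝ))) p := by
    have := (Real.hasDerivAt_rpow_const (x := p.1) (p := -a)
      (Or.inl (ne_of_gt ht))).comp_hasFDerivAt p hfst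
    simpa [Function.comp_def] using this
  have hH' : HasFDerivAt H
      ((fderiv ℝ A p
        + ((b * p.1⁻¹) • fderiv ℝ B p
            + B p • (b • (-((p.1 ^ 2)⁻¹ • ContinuousLinearMap.fst ℝ ℝ (Fin 3 → ℝ))))))
        - ((p.1 ^ (-a)) • fderiv ℝ S p
            + S p • (-((a * p.1 ^ (-a - 1)) • ContinuousLinearMap.fst ℝ ℝ (Fin 3 → ℝ))))) p :=
    (hdA.hasFDerivAt.add ((hC.const_mul b).mul hdB.hasFDerivAt)).sub
      (hR.mul hdS.hasFDerivAt)
  have hfst_ei : (ContinuousLinearMap.fst ℝ ℝ (Fin 3 → ℝ)) ei = 0 := rfl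
  have heval : Dv ei H p
      = Dv ei A p + b * p.1⁻¹ * Dv ei B p - p.1 ^ (-a) * Dv ei S p := by
    have hfd := hH'.fderiv
    simp only [Dv, hfd]
    simp [hfst_ei]
  have hcommB : Dv ei B p = Dv (1, 0) (Dv ei F) p := Dv_comm h.smooth hp (1, 0) ei
  have hcommA : Dv ei A p = Dv (1, 0) (Dv (1, 0) (Dv ei F)) p := by
    calc Dv ei A p = Dv (1, 0) (Dv ei B) p :=
          Dv_comm (smoothU_Dv h.smooth (1, 0)) hp (1, 0) ei
    _ = Dv (1, 0) (Dv (1, 0) (Dv ei F)) p :=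
          Dv_congr_on (fun q hq => Dv_comm h.smooth hq (1, 0) ei) hp (1, 0)
  have hcommS : Dv ei S p
      = ∑ j : Fin 3, Dv (0, Pi.single j 1) (Dv (0, Pi.single j 1) (Dv ei F)) p := by
    rw [Dv_sum hdSj ei]
    refine Finset.sum_congr rfl fun j _ => ?_
    set ej : P3 := (0, Pi.single j 1) with hej
    calc Dv ei (Dv ej (Dv ej F)) p = Dv ej (Dv ei (Dv ej F)) p :=
          Dv_comm (smoothU_Dv h.smooth ej) hp ej ei
    _ = Dv ej (Dv ej (Dv ei F)) p :=
          Dv_congr_on (fun q hq => Dv_comm h.smooth hq ej ei) hp ej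
  rw [heval, hcommA, hcommB, hcommS] at hDH0
  exact hDH0


lemma hasFDerivAt_rpow_fst (c : ℝ) {p : P3} (ht : 0 < p.1) :
    HasFDerivAt (fun q : P3 => q.1 ^ c)
      ((c * p.1 ^ (c - 1)) • ContinuousLinearMap.fst ℝ ℝ (Fin 3 → ℝ)) p := by
  have := (Real.hasDerivAt_rpow_const (x := p.1) (p := c)
    (Or.inl (ne_of_gt ht))).comp_hasFDerivAt p
    (hasFDerivAt_fst (p := p) (𝕜 := ℝ))
  simpa [Function.comp_def] using this

lemma contDiffOn_rpow_fst (c : ℝ) : ContDiffOn ℝ (⊤ : ℕ∞) (fun q : P3 => q.1 ^ c) Upos := by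
  intro p hp
  apply ContDiffWithinAt.contDiffAt _ (isOpen_Upos.mem_nhds hp) |>.contDiffWithinAt
  exact ((Real.contDiffAt_rpow_const_of_ne (ne_of_gt hp)).comp p
    (contDiffAt_fst)).contDiffWithinAt

lemma goodWave_base (γ : ℝ) (hγ0 : 0 < γ) (ψ : ℝ → (Fin 3 → ℝ) → ℝ)
    (hsmooth : SmoothOnPos ψ)
    (hper : ∀ t : ℝ, 0 < t → ZPeriodic (ψ t))
    (hwave : FLRWwave γ ψ) :
    GoodWave (4 / (3 * γ)) (2 - 2 / γ) (fun p : P3 => p.1 ^ (2 / γ - 1) * ψ p.1 p.2) := by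
  set c : ℝ := 2 / γ - 1 with hcdef
  set a : ℝ := 4 / (3 * γ) with hadef
  set Fψ : P3 → ℝ := fun p => ψ p.1 p.2 with hFψ
  have hψ : ContDiffOn ℝ (⊤ : ℕ∞) Fψ Upos := hsmooth
  set Fφ : P3 → ℝ := fun p : P3 => p.1 ^ c * ψ p.1 p.2 with hFφ
  have hφ : ContDiffOn ℝ (⊤ : ℕ∞) Fφ Upos := (contDiffOn_rpow_fst c).mul hψ
  -- the ψ wave equation in Dv form
  have hwaveD : ∀ p : P3, p ∈ Upos →
      Dv (1, 0) (Dv (1, 0) Fψ) p + (c + 1) * p.1⁻¹ * Dv (1, 0) Fψ p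
        - p.1 ^ (-a) * ∑ i : Fin 3, Dv (0, Pi.single i 1) (Dv (0, Pi.single i 1) Fψ) p = 0 := by
    rintro ⟨t, x⟩ hp
    have ht : 0 < t := hp
    have e1 : ∀ s : ℝ, 0 < s → ∀ y, dtd ψ s y = Dv (1, 0) Fψ (s, y) := by
      intro s hs y
      exact dtd_slice hψ hs y
    have e2 : dtd (dtd ψ) t x = Dv (1, 0) (Dv (1, 0) Fψ) (t, x) := by
      have hev : (fun s => dtd ψ s x) =ᶠ[nhds t] fun s => Dv (1, 0) Fψ (s, x) := by
        filter_upwards [eventually_gt_nhds ht] with s hs using e1 s hs x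
      rw [dtd, hev.deriv_eq]
      exact dtd_slice (smoothU_Dv hψ (1, 0)) ht x
    have e3 : ∀ i : Fin 3, pd i (pd i (ψ t)) x
        = Dv (0, Pi.single i 1) (Dv (0, Pi.single i 1) Fψ) (t, x) := by
      intro i
      have h1 : pd i (ψ t) = fun y => Dv (0, Pi.single i 1) Fψ (t, y) := by
        funext y
        exact pd_slice_s9 hψ ht y i
      rw [h1]
      exact pd_slice_s9 (smoothU_Dv hψ _) ht x i
    have := hwave t ht x
    rw [e2, e1 t ht x] at this
    simp only [e3] at this
    have hc1 : c + 1 = 2 / γ := by rw [hcdef]; ring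
    rw [hc1]
    convert this using 3
  constructor
  · exact hφ
  · intro t ht x k
    show t ^ c * ψ t (x + fun i => (k i : ℝ)) = t ^ c * ψ t x
    rw [hper t ht x k]
  · rintro p hpU
    have ht : 0 < p.1 := hpU
    set B : P3 → ℝ := Dv (1, 0) Fψ with hB
    -- first derivatives of Fφ on Upos
    have hdtφ : ∀ q ∈ Upos, Dv (1, 0) Fφ q
        = c * q.1 ^ (c - 1) * Fψ q + q.1 ^ c * B q := by
      intro q hq
      have hm : HasFDerivAt Fφ
          (q.1 ^ c • fderiv ℝ Fψ q
            + Fψ q • ((c * q.1 ^ (c - 1)) • ContinuousLinearMap.fst ℝ ℝ (Fin 3 → ℝ))) q :=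
        (hasFDerivAt_rpow_fst c hq).mul (smoothU_differentiableAt hψ hq).hasFDerivAt
      simp only [Dv, hm.fderiv]
      simp [hB, Dv]
      ring
    have hdxφ : ∀ j : Fin 3, ∀ q ∈ Upos, Dv (0, Pi.single j 1) Fφ q
        = q.1 ^ c * Dv (0, Pi.single j 1) Fψ q := by
      intro j q hq
      have hm : HasFDerivAt Fφ
          (q.1 ^ c • fderiv ℝ Fψ q
            + Fψ q • ((c * q.1 ^ (c - 1)) • ContinuousLinearMap.fst ℝ ℝ (Fin 3 → ℝ))) q :=
        (hasFDerivAt_rpow_fst c hq).mul (smoothU_differentiableAt hψ hq).hasFDerivAt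
      simp only [Dv, hm.fderiv]
      have : (ContinuousLinearMap.fst ℝ ℝ (Fin 3 → ℝ)) ((0 : ℝ), Pi.single j (1:ℝ)) = 0 := rfl
      simp [this]
  -- second derivatives
    have hdttφ : Dv (1, 0) (Dv (1, 0) Fφ) p
        = c * (c - 1) * p.1 ^ (c - 2) * Fψ p + 2 * c * p.1 ^ (c - 1) * B p
          + p.1 ^ c * Dv (1, 0) B p := by
      rw [Dv_congr_on hdtφ hpU (1, 0)]
      have h1 : HasFDerivAt (fun q : P3 => c * q.1 ^ (c - 1) * Fψ q)
          ((c * p.1 ^ (c - 1)) • fderiv ℝ Fψ p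
            + Fψ p • (c • (((c - 1) * p.1 ^ (c - 1 - 1))
                • ContinuousLinearMap.fst ℝ ℝ (Fin 3 → ℝ)))) p := by
        have := ((hasFDerivAt_rpow_fst (c - 1) ht).const_mul c).fun_mul
          (smoothU_differentiableAt hψ hpU).hasFDerivAt
        exact this
      have h2 : HasFDerivAt (fun q : P3 => q.1 ^ c * B q)
          (p.1 ^ c • fderiv ℝ B p
            + B p • ((c * p.1 ^ (c - 1)) • ContinuousLinearMap.fst ℝ ℝ (Fin 3 → ℝ))) p :=
        (hasFDerivAt_rpow_fst c ht).mul
          (smoothU_differentiableAt (smoothU_Dv hψ (1, 0)) hpU).hasFDerivAt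
      have hsum := h1.fun_add h2
      simp only [Dv, hsum.fderiv]
      have hc2 : c - 1 - 1 = c - 2 := by ring
      simp [hc2, hB, Dv]
      ring
    have hdxxφ : ∀ j : Fin 3, Dv (0, Pi.single j 1) (Dv (0, Pi.single j 1) Fφ) p
        = p.1 ^ c * Dv (0, Pi.single j 1) (Dv (0, Pi.single j 1) Fψ) p := by
      intro j
      rw [Dv_congr_on (hdxφ j) hpU (0, Pi.single j 1)]
      have h2 : HasFDerivAt (fun q : P3 => q.1 ^ c * Dv (0, Pi.single j 1) Fψ q)
          (p.1 ^ c • fderiv ℝ (Dv (0, Pi.single j 1) Fψ) p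
            + Dv (0, Pi.single j 1) Fψ p
              • ((c * p.1 ^ (c - 1)) • ContinuousLinearMap.fst ℝ ℝ (Fin 3 → ℝ))) p :=
        (hasFDerivAt_rpow_fst c ht).mul
          (smoothU_differentiableAt (smoothU_Dv hψ _) hpU).hasFDerivAt
      show (fderiv ℝ (fun q : P3 => q.1 ^ c * Dv (0, Pi.single j 1) Fψ q) p)
          ((0 : ℝ), Pi.single j (1:ℝ)) = _
      rw [h2.fderiv]
      have h0 : (ContinuousLinearMap.fst ℝ ℝ (Fin 3 → ℝ)) ((0 : ℝ), Pi.single j (1:ℝ)) = 0 := rfl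
      simp [Dv, h0]
    -- assemble
    have hw := hwaveD p hpU
    rw [hdttφ, hdtφ p hpU]
    have hsum : ∑ i : Fin 3, Dv (0, Pi.single i 1) (Dv (0, Pi.single i 1) Fφ) p
        = p.1 ^ c * ∑ i : Fin 3, Dv (0, Pi.single i 1) (Dv (0, Pi.single i 1) Fψ) p := by
      rw [Finset.mul_sum]
      exact Finset.sum_congr rfl fun j _ => hdxxφ j
    rw [hsum]
    -- rpow algebra
    have hr1 : p.1 ^ (c - 1) = p.1 ^ c / p.1 := by
      rw [Real.rpow_sub ht, Real.rpow_one]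
    have hr2 : p.1 ^ (c - 2) = p.1 ^ c / p.1 / p.1 := by
      have : c - 2 = c - 1 - 1 := by ring
      rw [this, Real.rpow_sub ht, Real.rpow_one, hr1]
    -- express DttFψ from the wave equation and finish by field_simp/ring
    have hDtt : Dv (1, 0) (Dv (1, 0) Fψ) p
        = -((c + 1) * p.1⁻¹ * B p) + p.1 ^ (-a)
            * ∑ i : Fin 3, Dv (0, Pi.single i 1) (Dv (0, Pi.single i 1) Fψ) p := by
      rw [hB]; linarith [hw]
    rw [hDtt]
    rw [hr1, hr2]
    have hbc : 2 - 2 / γ = 1 - c := by rw [hcdef]; ring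
    rw [hbc]
    clear_value c a
    have hp1 : p.1 ≠ 0 := ne_of_gt ht
    field_simp
    ring


lemma insertNth_one_eq (i : Fin 3) (x : Fin 2 → ℝ) :
    i.insertNth (1 : ℝ) x
      = i.insertNth (0 : ℝ) x + fun j => (((Pi.single i 1 : Fin 3 → ℤ)) j : ℝ) := by
  funext j
  refine Fin.succAboveCases i ?_ ?_ j
  · simp
  · intro k
    simp [Fin.insertNth_apply_succAbove, Pi.single_eq_of_ne (Fin.succAbove_ne i k)]

lemma continuous_fderiv_apply {g : (Fin 3 → ℝ) → ℝ} (hg : ContDiff ℝ (⊤ : ℕ∞) g)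
    (v : Fin 3 → ℝ) : Continuous fun x => fderiv ℝ g x v :=
  (hg.continuous_fderiv (by simp)).clm_apply continuous_const

lemma integral_pd_zero {g : (Fin 3 → ℝ) → ℝ} (hg : ContDiff ℝ (⊤ : ℕ∞) g)
    (hper : ZPeriodic g) (i : Fin 3) :
    ∫ x in cube, pd i g x = 0 := by
  have hgd : Differentiable ℝ g := hg.differentiable (by simp)
  set f : Fin 3 → (Fin 3 → ℝ) → ℝ := fun j => if j = i then g else fun _ => 0 with hf
  set f' : Fin 3 → (Fin 3 → ℝ) → (Fin 3 → ℝ) →L[ℝ] ℝ :=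
    fun j x => if j = i then fderiv ℝ g x else 0 with hf'
  have hle : (0 : Fin 3 → ℝ) ≤ 1 := fun _ => zero_le_one
  have Hc : ∀ j, ContinuousOn (f j) (Icc 0 1) := by
    intro j
    rcases eq_or_ne j i with rfl | hj
    · simpa [hf] using hg.continuous.continuousOn
    · simp [hf, hj]
      exact continuousOn_const
  have Hd : ∀ x ∈ (Set.univ.pi fun k : Fin 3 => Ioo ((0 : Fin 3 → ℝ) k) ((1 : Fin 3 → ℝ) k))
      \ (∅ : Set (Fin 3 → ℝ)), ∀ j, HasFDerivAt (f j) (f' j x) x := by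
    intro x _ j
    rcases eq_or_ne j i with rfl | hj
    · simpa [hf, hf'] using (hgd x).hasFDerivAt
    · simp only [hf, hf', if_neg hj]
      exact hasFDerivAt_const 0 x
  have hcont : Continuous fun x => ∑ j : Fin 3, (f' j x) (Pi.single j 1) := by
    apply continuous_finset_sum
    intro j _
    rcases eq_or_ne j i with rfl | hj
    · simpa [hf'] using continuous_fderiv_apply hg (Pi.single j 1)
    · simp [hf', hj]
      exact continuous_const
  have Hi : IntegrableOn (fun x => ∑ j : Fin 3, (f' j x) (Pi.single j 1)) (Icc 0 1) volume :=
    hcont.continuousOn.integrableOn_compact isCompact_Icc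
  have key := integral_divergence_of_hasFDerivAt_off_countable'
    (0 : Fin 3 → ℝ) (1 : Fin 3 → ℝ) hle f f' ∅ countable_empty Hc Hd Hi
  have hlhs : ∫ x in Icc (0 : Fin 3 → ℝ) 1, ∑ j : Fin 3, (f' j x) (Pi.single j 1)
      = ∫ x in cube, pd i g x := by
    refine setIntegral_congr_fun measurableSet_Icc fun x _ => ?_
    have : ∑ j : Fin 3, (f' j x) (Pi.single j 1) = fderiv ℝ g x (Pi.single i 1) := by
      rw [Finset.sum_eq_single i]
      · simp [hf']
      · intro j _ hj; simp [hf', hj]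
      · intro h; exact absurd (Finset.mem_univ i) h
    rw [this, ← pd_eq_fderiv_s9 (hgd x).hasFDerivAt i]
  have hrhs : ∑ j : Fin 3, ((∫ x in Icc ((0:Fin 3 → ℝ) ∘ j.succAbove) ((1:Fin 3 → ℝ) ∘ j.succAbove),
        f j (j.insertNth ((1:Fin 3 → ℝ) j) x))
      - ∫ x in Icc ((0:Fin 3 → ℝ) ∘ j.succAbove) ((1:Fin 3 → ℝ) ∘ j.succAbove),
        f j (j.insertNth ((0:Fin 3 → ℝ) j) x)) = 0 := by
    apply Finset.sum_eq_zero
    intro j _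
    rcases eq_or_ne j i with rfl | hj
    · have : ∀ x : Fin 2 → ℝ, f j (j.insertNth ((1:Fin 3 → ℝ) j) x)
          = f j (j.insertNth ((0:Fin 3 → ℝ) j) x) := by
        intro x
        simp only [hf, if_pos rfl, Pi.one_apply, Pi.zero_apply]
        rw [insertNth_one_eq]
        exact hper _ _
      rw [integral_congr_ae (ae_of_all _ fun x => this x)]
      exact sub_self _
    · simp [hf, hj]
  rw [hlhs, hrhs] at key
  exact key

lemma hasDerivAt_pd {u : (Fin 3 → ℝ) → ℝ} {x : Fin 3 → ℝ} {L : (Fin 3 → ℝ) →L[ℝ] ℝ}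
    (h : HasFDerivAt u L x) (i : Fin 3) :
    HasDerivAt (fun s => u (Function.update x i s)) (pd i u x) (x i) := by
  have h2 : HasFDerivAt u L (Function.update x i (x i)) := by rwa [Function.update_eq_self]
  have hc := h2.comp_hasDerivAt (x i) (hasDerivAt_update3 x i (x i))
  rw [pd_eq_fderiv_s9 h i]
  simpa [Function.comp_def] using hc

lemma pd_mul {u v : (Fin 3 → ℝ) → ℝ} (hu : Differentiable ℝ u) (hv : Differentiable ℝ v)
    (i : Fin 3) (x : Fin 3 → ℝ) :
    pd i (fun y => u y * v y) x = pd i u x * v x + u x * pd i v x := by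
  have h := (hasDerivAt_pd (hu x).hasFDerivAt i).mul (hasDerivAt_pd (hv x).hasFDerivAt i)
  rw [Function.update_eq_self] at h
  exact h.deriv


lemma smoothU_slice {F : P3 → ℝ} (hF : ContDiffOn ℝ (⊤ : ℕ∞) F Upos) {t : ℝ} (ht : 0 < t) :
    ContDiff ℝ (⊤ : ℕ∞) (fun x => F (t, x)) := by
  rw [contDiff_iff_contDiffAt]
  intro x
  exact (hF.contDiffAt (isOpen_Upos.mem_nhds (show ((t, x) : P3) ∈ Upos from ht))).comp x
    (contDiffAt_const.prodMk contDiffAt_id)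

lemma cube_compact : IsCompact cube := isCompact_Icc

lemma cube_meas : MeasurableSet cube := measurableSet_Icc

lemma intCube_cont {f : (Fin 3 → ℝ) → ℝ} (hf : Continuous f) : IntegrableOn f cube :=
  hf.continuousOn.integrableOn_compact cube_compact

lemma intCube {G : P3 → ℝ} (hG : ContDiffOn ℝ (⊤ : ℕ∞) G Upos) {s : ℝ} (hs : 0 < s) :
    IntegrableOn (fun x => G (s, x)) cube :=
  intCube_cont (smoothU_slice hG hs).continuous

lemma ZPeriodic.mul {f g : (Fin 3 → ℝ) → ℝ} (hf : ZPeriodic f) (hg : ZPeriodic g) :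
    ZPeriodic (fun x => f x * g x) := fun x k => by simp only [hf x k, hg x k]

lemma Dv_sq {B : P3 → ℝ} {p : P3} (hB : DifferentiableAt ℝ B p) (v : P3) :
    Dv v (fun q => B q * B q) p = 2 * B p * Dv v B p := by
  have h := (hB.hasFDerivAt.fun_mul hB.hasFDerivAt).fderiv
  simp only [Dv, h]
  simp
  ring

lemma hasDerivAt_intCube {G : P3 → ℝ} (hG : ContDiffOn ℝ (⊤ : ℕ∞) G Upos) {t : ℝ}
    (ht : 0 < t) :
    HasDerivAt (fun s => ∫ x in cube, G (s, x))
      (∫ x in cube, Dv (1, 0) G (t, x)) t := by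
  have hsub : Icc (t / 2) (3 * t / 2) ×ˢ cube ⊆ Upos := by
    rintro ⟨s, x⟩ ⟨hs, _⟩
    exact lt_of_lt_of_le (by linarith) hs.1
  obtain ⟨C, hC⟩ := (isCompact_Icc.prod cube_compact).exists_bound_of_continuousOn
    (((smoothU_Dv hG (1, 0)).continuousOn).mono hsub)
  have hball : ∀ s ∈ Metric.ball t (t / 2), 0 < s ∧ s ∈ Icc (t / 2) (3 * t / 2) := by
    intro s hs
    rw [Metric.mem_ball, Real.dist_eq, abs_sub_lt_iff] at hs
    refine ⟨by linarith [hs.1, hs.2], by constructor <;> [linarith [hs.2]; linarith [hs.1]]⟩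
  exact (hasDerivAt_integral_of_dominated_loc_of_deriv_le
    (F := fun s x => G (s, x)) (F' := fun s x => Dv (1, 0) G (s, x))
    (x₀ := t) (s := Metric.ball t (t / 2)) (bound := fun _ => C)
    (μ := volume.restrict cube) (Metric.ball_mem_nhds t (by positivity))
    (by filter_upwards [eventually_gt_nhds ht] with s hs
        exact ((smoothU_slice hG hs).continuous).aestronglyMeasurable)
    (intCube hG ht)
    (((smoothU_slice (smoothU_Dv hG (1, 0)) ht).continuous).aestronglyMeasurable)
    (by rw [ae_restrict_iff' cube_meas]
        exact ae_of_all _ fun x hx s hs => hC (s, x) ⟨(hball s hs).2, hx⟩)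
    (integrableOn_const cube_compact.measure_lt_top.ne)
    (ae_of_all _ fun x s hs =>
      hasDerivAt_slice_t (smoothU_hasFDerivAt hG ((hball s hs).1)))).2

lemma energy_mono {a b : ℝ} (ha : 0 < a) (hab : 2 * b ≤ a) {F : P3 → ℝ}
    (h : GoodWave a b F) {t₀ t : ℝ} (ht : t ∈ Ioc (0 : ℝ) t₀) :
    (1 / 2) * ∫ x in cube, (t ^ a * (Dv (1, 0) F (t, x)) ^ 2
        + ∑ i : Fin 3, (Dv (0, Pi.single i 1) F (t, x)) ^ 2)
      ≤ (1 / 2) * ∫ x in cube, (t₀ ^ a * (Dv (1, 0) F (t₀, x)) ^ 2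
        + ∑ i : Fin 3, (Dv (0, Pi.single i 1) F (t₀, x)) ^ 2) := by
  have ht0 : 0 < t := ht.1
  have ht₀ : 0 < t₀ := lt_of_lt_of_le ht0 ht.2
  set B : P3 → ℝ := Dv (1, 0) F with hB
  have hBs : ContDiffOn ℝ (⊤ : ℕ∞) B Upos := smoothU_Dv h.smooth (1, 0)
  set Dx : Fin 3 → P3 → ℝ := fun i => Dv (0, Pi.single i 1) F with hDx
  have hDxs : ∀ i, ContDiffOn ℝ (⊤ : ℕ∞) (Dx i) Upos := fun i => smoothU_Dv h.smooth _
  set Bsq : P3 → ℝ := fun p => B p * B p with hBsq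
  have hBsqs : ContDiffOn ℝ (⊤ : ℕ∞) Bsq Upos := hBs.mul hBs
  set Xsq : P3 → ℝ := fun p => ∑ i : Fin 3, Dx i p * Dx i p with hXsq
  have hXsqs : ContDiffOn ℝ (⊤ : ℕ∞) Xsq Upos :=
    ContDiffOn.sum fun i _ => (hDxs i).mul (hDxs i)
  set I : ℝ → ℝ := fun s => ∫ x in cube, Bsq (s, x) with hI
  set J : ℝ → ℝ := fun s => ∫ x in cube, Xsq (s, x) with hJ
  set E : ℝ → ℝ := fun s => (1 / 2) * (s ^ a * I s + J s) with hE
  have key : ∀ s : ℝ, 0 < s → HasDerivAt E ((a / 2 - b) * s ^ (a - 1) * I s) s := by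
    intro s hs
    have hsne : s ≠ 0 := ne_of_gt hs
    have hId : HasDerivAt I (∫ x in cube, Dv (1, 0) Bsq (s, x)) s := hasDerivAt_intCube hBsqs hs
    have hJd : HasDerivAt J (∫ x in cube, Dv (1, 0) Xsq (s, x)) s := hasDerivAt_intCube hXsqs hs
    have hrd : HasDerivAt (fun s : ℝ => s ^ a) (a * s ^ (a - 1)) s :=
      Real.hasDerivAt_rpow_const (Or.inl hsne)
    have hEd : HasDerivAt E ((1 / 2) * ((a * s ^ (a - 1) * I s
        + s ^ a * (∫ x in cube, Dv (1, 0) Bsq (s, x)))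
        + (∫ x in cube, Dv (1, 0) Xsq (s, x)))) s :=
      ((hrd.mul hId).add hJd).const_mul (1 / 2 : ℝ)
    -- integrability of the various integrands
    have contB : Continuous fun x => B (s, x) := (smoothU_slice hBs hs).continuous
    have contDx : ∀ i, Continuous fun x => Dx i (s, x) :=
      fun i => (smoothU_slice (hDxs i) hs).continuous
    have contDxB : ∀ i : Fin 3, Continuous fun x => Dv (0, Pi.single i 1) B (s, x) :=
      fun i => (smoothU_slice (smoothU_Dv hBs _) hs).continuous
    have contDxDx : ∀ i : Fin 3, Continuous fun x => Dv (0, Pi.single i 1) (Dx i) (s, x) :=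
      fun i => (smoothU_slice (smoothU_Dv (hDxs i) _) hs).continuous
    have int2 : IntegrableOn (fun x => -(2 * b) * s ^ (a - 1) * Bsq (s, x)) cube :=
      (intCube hBsqs hs).const_mul _
    have int3i : ∀ i : Fin 3, IntegrableOn
        (fun x => 2 * B (s, x) * Dv (0, Pi.single i 1) (Dx i) (s, x)) cube :=
      fun i => intCube_cont (((continuous_const.mul contB)).mul (contDxDx i))
    have int4i : ∀ i : Fin 3, IntegrableOn
        (fun x => 2 * Dx i (s, x) * Dv (0, Pi.single i 1) B (s, x)) cube :=
      fun i => intCube_cont (((continuous_const.mul (contDx i))).mul (contDxB i))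
    have int3 : IntegrableOn (fun x => ∑ i : Fin 3,
        2 * B (s, x) * Dv (0, Pi.single i 1) (Dx i) (s, x)) cube :=
      integrable_finset_sum _ fun i _ => int3i i
    -- pointwise identities
    have hXsq' : ∀ x : Fin 3 → ℝ, Dv (1, 0) Xsq (s, x)
        = ∑ i : Fin 3, 2 * Dx i (s, x) * Dv (0, Pi.single i 1) B (s, x) := by
      intro x
      have hpU : ((s, x) : P3) ∈ Upos := hs
      rw [hXsq]
      rw [Dv_sum (fun i => ((smoothU_differentiableAt (hDxs i) hpU).fun_mul
        (smoothU_differentiableAt (hDxs i) hpU))) (1, 0)]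
      refine Finset.sum_congr rfl fun i _ => ?_
      rw [Dv_sq (smoothU_differentiableAt (hDxs i) hpU) (1, 0)]
      rw [Dv_comm h.smooth hpU _ _]
    have hwavept : ∀ x : Fin 3 → ℝ, s ^ a * Dv (1, 0) Bsq (s, x)
        = -(2 * b) * s ^ (a - 1) * Bsq (s, x)
          + ∑ i : Fin 3, 2 * B (s, x) * Dv (0, Pi.single i 1) (Dx i) (s, x) := by
      intro x
      have hpU : ((s, x) : P3) ∈ Upos := hs
      have hw := h.wave (s, x) hpU
      have hDtB : Dv (1, 0) B (s, x)
          = -(b * s⁻¹ * B (s, x)) + s ^ (-a) * ∑ i : Fin 3,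
              Dv (0, Pi.single i 1) (Dx i) (s, x) := by
        simp only [hDx, hB] at hw ⊢
        linarith [hw]
      have hBsq' := Dv_sq (smoothU_differentiableAt hBs hpU) ((1 : ℝ), (0 : Fin 3 → ℝ))
      rw [hBsq, hBsq', hDtB]
      have hr1 : s ^ (a - 1) = s ^ a / s := by rw [Real.rpow_sub hs, Real.rpow_one]
      have hr2 : s ^ (-a) = (s ^ a)⁻¹ := Real.rpow_neg (le_of_lt hs) a
      have hsa : s ^ a ≠ 0 := ne_of_gt (Real.rpow_pos_of_pos hs a)
      rw [hr1, hr2, ← Finset.mul_sum]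
      field_simp
    -- integration by parts
    have hIBP : ∀ i : Fin 3, (∫ x in cube,
        (Dv (0, Pi.single i 1) B (s, x) * Dx i (s, x)
          + B (s, x) * Dv (0, Pi.single i 1) (Dx i) (s, x))) = 0 := by
      intro i
      have hu : ContDiff ℝ (⊤ : ℕ∞) (fun y => B (s, y)) := smoothU_slice hBs hs
      have hv : ContDiff ℝ (⊤ : ℕ∞) (fun y => Dx i (s, y)) := smoothU_slice (hDxs i) hs
      have hguv : ContDiff ℝ (⊤ : ℕ∞) (fun y => B (s, y) * Dx i (s, y)) := hu.mul hv
      have hperuv : ZPeriodic (fun y => B (s, y) * Dx i (s, y)) :=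
        (Dv_periodic h.smooth h.periodic (1, 0) s hs).mul
          (Dv_periodic h.smooth h.periodic (0, Pi.single i 1) s hs)
      have h0 := integral_pd_zero hguv hperuv i
      have hpd : ∀ x, pd i (fun y => B (s, y) * Dx i (s, y)) x
          = Dv (0, Pi.single i 1) B (s, x) * Dx i (s, x)
            + B (s, x) * Dv (0, Pi.single i 1) (Dx i) (s, x) := by
        intro x
        rw [pd_mul (hu.differentiable (by simp))
          (hv.differentiable (by simp)) i x]
        rw [pd_slice_s9 hBs hs x i, pd_slice_s9 (hDxs i) hs x i]
      refine Eq.trans ?_ h0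
      exact setIntegral_congr_fun cube_meas fun x _ => (hpd x).symm
    have hcancel : ∀ i : Fin 3,
        (∫ x in cube, 2 * B (s, x) * Dv (0, Pi.single i 1) (Dx i) (s, x))
          + (∫ x in cube, 2 * Dx i (s, x) * Dv (0, Pi.single i 1) B (s, x)) = 0 := by
      intro i
      rw [← integral_add (int3i i) (int4i i)]
      have e1 : ∀ x : Fin 3 → ℝ, 2 * B (s, x) * Dv (0, Pi.single i 1) (Dx i) (s, x)
            + 2 * Dx i (s, x) * Dv (0, Pi.single i 1) B (s, x)
          = 2 * (Dv (0, Pi.single i 1) B (s, x) * Dx i (s, x)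
            + B (s, x) * Dv (0, Pi.single i 1) (Dx i) (s, x)) := fun x => by ring
      rw [setIntegral_congr_fun cube_meas fun x _ => e1 x, integral_const_mul, hIBP i, mul_zero]
    have hsplit1 : s ^ a * (∫ x in cube, Dv (1, 0) Bsq (s, x))
        = -(2 * b) * s ^ (a - 1) * I s
          + ∑ i : Fin 3, ∫ x in cube, 2 * B (s, x) * Dv (0, Pi.single i 1) (Dx i) (s, x) := by
      calc s ^ a * (∫ x in cube, Dv (1, 0) Bsq (s, x))
          = ∫ x in cube, s ^ a * Dv (1, 0) Bsq (s, x) := (integral_const_mul _ _).symm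
        _ = ∫ x in cube, (-(2 * b) * s ^ (a - 1) * Bsq (s, x)
              + ∑ i : Fin 3, 2 * B (s, x) * Dv (0, Pi.single i 1) (Dx i) (s, x)) :=
            setIntegral_congr_fun cube_meas fun x _ => hwavept x
        _ = (∫ x in cube, -(2 * b) * s ^ (a - 1) * Bsq (s, x))
              + ∫ x in cube, ∑ i : Fin 3,
                2 * B (s, x) * Dv (0, Pi.single i 1) (Dx i) (s, x) := integral_add int2 int3
        _ = -(2 * b) * s ^ (a - 1) * I s
              + ∑ i : Fin 3, ∫ x in cube,
                2 * B (s, x) * Dv (0, Pi.single i 1) (Dx i) (s, x) := by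
            rw [integral_const_mul, integral_finset_sum _ fun i _ => int3i i]
    have hsplit2 : (∫ x in cube, Dv (1, 0) Xsq (s, x))
        = ∑ i : Fin 3, ∫ x in cube, 2 * Dx i (s, x) * Dv (0, Pi.single i 1) B (s, x) := by
      rw [setIntegral_congr_fun cube_meas fun x _ => hXsq' x,
        integral_finset_sum _ fun i _ => int4i i]
    have hzero : (∑ i : Fin 3, ∫ x in cube,
          2 * B (s, x) * Dv (0, Pi.single i 1) (Dx i) (s, x))
        + ∑ i : Fin 3, ∫ x in cube,
          2 * Dx i (s, x) * Dv (0, Pi.single i 1) B (s, x) = 0 := by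
      rw [← Finset.sum_add_distrib]
      exact Finset.sum_eq_zero fun i _ => hcancel i
    have goalval : (1 / 2) * ((a * s ^ (a - 1) * I s
        + s ^ a * (∫ x in cube, Dv (1, 0) Bsq (s, x)))
        + (∫ x in cube, Dv (1, 0) Xsq (s, x)))
        = (a / 2 - b) * s ^ (a - 1) * I s := by
      rw [hsplit1, hsplit2]
      linear_combination (1 / 2) * hzero
    rw [← goalval]
    exact hEd
  -- monotonicity of E on [t, t₀]
  have hmono : MonotoneOn E (Icc t t₀) := by
    apply monotoneOn_of_deriv_nonneg (convex_Icc t t₀)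
    · exact fun s hs => ((key s (lt_of_lt_of_le ht0 hs.1)).continuousAt.continuousWithinAt)
    · intro s hs
      rw [interior_Icc] at hs
      exact ((key s (lt_trans ht0 hs.1)).differentiableAt.differentiableWithinAt)
    · intro s hs
      rw [interior_Icc] at hs
      have hspos : 0 < s := lt_trans ht0 hs.1
      rw [(key s hspos).deriv]
      have hInn : 0 ≤ I s := setIntegral_nonneg cube_meas fun x _ => mul_self_nonneg _
      have h1 : (0:ℝ) ≤ a / 2 - b := by linarith
      have h2 : (0:ℝ) ≤ s ^ (a - 1) := le_of_lt (Real.rpow_pos_of_pos hspos _)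
      positivity
  have hfin : E t ≤ E t₀ := hmono ⟨le_refl t, ht.2⟩ ⟨ht.2, le_refl t₀⟩ ht.2
  have hconv : ∀ s : ℝ, 0 < s → (1 / 2) * ∫ x in cube, (s ^ a * (B (s, x)) ^ 2
      + ∑ i : Fin 3, (Dx i (s, x)) ^ 2) = E s := by
    intro s hs
    rw [hE]
    have e1 : IntegrableOn (fun x => s ^ a * Bsq (s, x)) cube := (intCube hBsqs hs).const_mul _
    have e2 : IntegrableOn (fun x => Xsq (s, x)) cube := intCube hXsqs hs
    have : (∫ x in cube, (s ^ a * (B (s, x)) ^ 2 + ∑ i : Fin 3, (Dx i (s, x)) ^ 2))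
        = s ^ a * I s + J s := by
      calc ∫ x in cube, (s ^ a * (B (s, x)) ^ 2 + ∑ i : Fin 3, (Dx i (s, x)) ^ 2)
          = ∫ x in cube, (s ^ a * Bsq (s, x) + Xsq (s, x)) := by
            refine setIntegral_congr_fun cube_meas fun x _ => ?_
            simp [hBsq, hXsq, pow_two]
        _ = (∫ x in cube, s ^ a * Bsq (s, x)) + ∫ x in cube, Xsq (s, x) := integral_add e1 e2
        _ = s ^ a * I s + J s := by rw [integral_const_mul]
    rw [this]
  rw [hconv t ht0, hconv t₀ ht₀]
  exact hfin


lemma smoothU_iterDv {F : P3 → ℝ} (hF : ContDiffOn ℝ (⊤ : ℕ∞) F Upos) (v : P3) :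
    ∀ n : ℕ, ContDiffOn ℝ (⊤ : ℕ∞) ((Dv v)^[n] F) Upos
  | 0 => hF
  | n + 1 => by
      rw [Function.iterate_succ_apply']
      exact smoothU_Dv (smoothU_iterDv hF v n) v

lemma GoodWave.iterDv {a b : ℝ} {F : P3 → ℝ} (h : GoodWave a b F) (i : Fin 3) :
    ∀ n : ℕ, GoodWave a b ((Dv (0, Pi.single i 1))^[n] F)
  | 0 => h
  | n + 1 => by
      rw [Function.iterate_succ_apply']
      exact (GoodWave.iterDv h i n).pdDv i

lemma iter_pd_slice (i : Fin 3) {F : P3 → ℝ} (hF : ContDiffOn ℝ (⊤ : ℕ∞) F Upos) {t : ℝ}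
    (ht : 0 < t) :
    ∀ n : ℕ, (pd i)^[n] (fun x => F (t, x)) = fun x => ((Dv (0, Pi.single i 1))^[n] F) (t, x)
  | 0 => rfl
  | n + 1 => by
      rw [Function.iterate_succ_apply', iter_pd_slice i hF ht n,
        Function.iterate_succ_apply']
      funext x
      exact pd_slice_s9 (smoothU_iterDv hF _ n) ht x i


/-- **Proposition 2, softest region (FLRW, `2/3 < γ ≤ 4/3`).** Renormalized energy
monotonicity `G_α(t) ≤ G_α(t₀)` for `φ = t^{2/γ−1} ψ`. -/
theorem flrw_renormalized_energy_soft
    (γ t₀ : ℝ) (hγ1 : 2 / 3 < γ) (hγ2 : γ < 2) (hγ3 : γ ≤ 4 / 3) (ht₀ : 0 < t₀)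
    (ψ : ℝ → (Fin 3 → ℝ) → ℝ)
    (hsmooth : SmoothOnPos ψ)
    (hper : ∀ t : ℝ, 0 < t → ZPeriodic (ψ t))
    (hwave : FLRWwave γ ψ) :
    ∀ α : Fin 3 → ℕ, ∀ t ∈ Set.Ioc (0 : ℝ) t₀,
      Gren γ (fun s x => s ^ (2 / γ - 1) * ψ s x) α t
        ≤ Gren γ (fun s x => s ^ (2 / γ - 1) * ψ s x) α t₀ := by
  intro α t ht
  have hγ0 : 0 < γ := by linarith
  set c : ℝ := 2 / γ - 1 with hc
  set a : ℝ := 4 / (3 * γ) with hadef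
  have ha : 0 < a := by rw [hadef]; positivity
  have hab : 2 * (2 - 2 / γ) ≤ a := by
    rw [hadef, le_div_iff₀ (by positivity : (0:ℝ) < 3 * γ)]
    have h2 : (2 - 2 / γ) * γ = 2 * γ - 2 := by field_simp
    calc 2 * (2 - 2 / γ) * (3 * γ) = 6 * ((2 - 2 / γ) * γ) := by ring
      _ = 6 * (2 * γ - 2) := by rw [h2]
      _ ≤ 4 := by linarith
  set Fφ : P3 → ℝ := fun p : P3 => p.1 ^ c * ψ p.1 p.2 with hFφ
  have hgood : GoodWave a (2 - 2 / γ) Fφ := goodWave_base γ hγ0 ψ hsmooth hper hwave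
  set G : P3 → ℝ := (Dv (0, Pi.single 0 1))^[α 0] ((Dv (0, Pi.single 1 1))^[α 1]
    ((Dv (0, Pi.single 2 1))^[α 2] Fφ)) with hG
  have hgoodG : GoodWave a (2 - 2 / γ) G :=
    ((hgood.iterDv 2 (α 2)).iterDv 1 (α 1)).iterDv 0 (α 0)
  have hGs : ContDiffOn ℝ (⊤ : ℕ∞) G Upos := hgoodG.smooth
  have hslice : ∀ s : ℝ, 0 < s →
      pdMulti α (fun x => s ^ c * ψ s x) = fun x => G (s, x) := by
    intro s hs
    have h2 : (fun x => s ^ c * ψ s x) = fun x => Fφ (s, x) := rfl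
    rw [pdMulti, h2, iter_pd_slice 2 hgood.smooth hs (α 2),
      iter_pd_slice 1 (smoothU_iterDv hgood.smooth _ (α 2)) hs (α 1),
      iter_pd_slice 0 (smoothU_iterDv (smoothU_iterDv hgood.smooth _ (α 2)) _ (α 1)) hs (α 0)]
  have hGren : ∀ s : ℝ, 0 < s → Gren γ (fun s x => s ^ c * ψ s x) α s
      = (1 / 2) * ∫ x in cube, (s ^ a * (Dv (1, 0) G (s, x)) ^ 2
          + ∑ i : Fin 3, (Dv (0, Pi.single i 1) G (s, x)) ^ 2) := by
    intro s hs
    simp only [Gren]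
    rw [← hadef]
    congr 1
    refine integral_congr_ae (ae_of_all _ fun x => ?_)
    have e1 : dtd (fun τ => pdMulti α (fun x => τ ^ c * ψ τ x)) s x
        = Dv (1, 0) G (s, x) := by
      rw [dtd]
      have hev : (fun τ => pdMulti α (fun x => τ ^ c * ψ τ x) x)
          =ᶠ[nhds s] fun τ => G (τ, x) := by
        filter_upwards [eventually_gt_nhds hs] with τ hτ
        rw [hslice τ hτ]
      rw [hev.deriv_eq]
      exact dtd_slice hGs hs x
    have e2 : ∀ i : Fin 3, pd i (pdMulti α (fun x => s ^ c * ψ s x)) x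
        = Dv (0, Pi.single i 1) G (s, x) := by
      intro i
      rw [hslice s hs]
      exact pd_slice_s9 hGs hs x i
    simp only [e1, e2]
  rw [hGren t ht.1, hGren t₀ (lt_of_lt_of_le ht.1 ht.2)]
  exact energy_mono ha hab hgoodG ht
end
end

section
/- For each i ∈ {1,2,3} and every t ∈ (0, t₀]: ‖∂_{x_i}ψ(t,·)‖_{L²(𝕋³)} ≤ ‖∂_{x_i}ψ(t₀,·)‖_{L²(𝕋³)} + ((t₀^{1−2/γ} − t^{1−2/γ})/(1 − 2/γ)) · ( ∫_{[0,1]³} [ t₀^{4/γ} (∂_t∂_{x_i}ψ)²(t₀,x) + t₀^{8/(3γ)} Σ_{j=1}^{3} (∂_{x_j}∂_{x_i}ψ)²(t₀,x) ] dx )^{1/2}. (Note (t₀^{1−2/γ} − t^{1−2/γ})/(1 − 2/γ) > 0 since 1 − 2/γ < 0.) -/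
noncomputable section

open MeasureTheory Filter Set

namespace FLRWaux

lemma one_le_itop : (1 : WithTop ℕ∞) ≤ ((⊤:ℕ∞) : WithTop ℕ∞) := by exact_mod_cast (le_top : (1:ℕ∞) ≤ ⊤)
lemma itop_ne_zero : ((⊤:ℕ∞) : WithTop ℕ∞) ≠ 0 := by exact_mod_cast (ne_of_gt (ENat.coe_lt_top 0) : (⊤:ℕ∞) ≠ ((0:ℕ):ℕ∞))
lemma two_le_itop : (2 : WithTop ℕ∞) ≤ ((⊤:ℕ∞) : WithTop ℕ∞) := by norm_cast
lemma add_one_le_itop : ((⊤:ℕ∞) : WithTop ℕ∞) + 1 ≤ ((⊤:ℕ∞) : WithTop ℕ∞) := by exact_mod_cast (le_top : ((⊤:ℕ∞)+1 : ℕ∞) ≤ ⊤)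


abbrev V3 := Fin 3 → ℝ

def Dd (v : ℝ × V3) (F : ℝ × V3 → ℝ) : ℝ × V3 → ℝ := fun p => fderiv ℝ F p v

def posSet : Set (ℝ × V3) := {p | 0 < p.1}

lemma isOpen_posSet : IsOpen posSet := isOpen_lt continuous_const continuous_fst

lemma mem_posSet {t : ℝ} (ht : 0 < t) (x : V3) : (t, x) ∈ posSet := ht

lemma diffAt {F : ℝ × V3 → ℝ} (h : ContDiffOn ℝ (⊤:ℕ∞) F posSet) {p} (hp : p ∈ posSet) :
    DifferentiableAt ℝ F p :=
  (h.contDiffAt (isOpen_posSet.mem_nhds hp)).differentiableAt itop_ne_zero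

lemma contDiffOn_Dd (v : ℝ × V3) {F : ℝ × V3 → ℝ} (h : ContDiffOn ℝ (⊤:ℕ∞) F posSet) :
    ContDiffOn ℝ (⊤:ℕ∞) (Dd v F) posSet :=
  (h.fderiv_of_isOpen isOpen_posSet (m := (⊤:ℕ∞)) add_one_le_itop).clm_apply contDiffOn_const

lemma continuousOn_of_smooth {F : ℝ × V3 → ℝ} (h : ContDiffOn ℝ (⊤:ℕ∞) F posSet) :
    ContinuousOn F posSet := h.continuousOn

lemma hasDerivAt_slice_t {F : ℝ × V3 → ℝ} {t : ℝ} {x : V3}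
    (hd : DifferentiableAt ℝ F (t, x)) :
    HasDerivAt (fun s => F (s, x)) (fderiv ℝ F (t, x) (1, 0)) t := by
  have hline : HasDerivAt (fun s : ℝ => (s, x)) ((1 : ℝ), (0 : V3)) t :=
    (hasDerivAt_id t).prodMk (hasDerivAt_const t x)
  exact hd.hasFDerivAt.comp_hasDerivAt t hline

lemma hasDerivAt_update (x : V3) (i : Fin 3) (s₀ : ℝ) :
    HasDerivAt (fun s : ℝ => Function.update x i s) (Pi.single i 1 : V3) s₀ := by
  have h : (fun s : ℝ => Function.update x i s) =
      fun s : ℝ => x + (s - x i) • (Pi.single i 1 : V3) := by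
    funext s
    funext j
    by_cases hj : j = i
    · subst hj; simp
    · simp [Function.update, hj, Pi.single_eq_of_ne hj]
  rw [h]
  simpa using (((hasDerivAt_id s₀).sub_const (x i)).smul_const (Pi.single i 1 : V3)).const_add x

lemma hasDerivAt_slice_x {F : ℝ × V3 → ℝ} {t : ℝ} {x : V3}
    (hd : DifferentiableAt ℝ F (t, x)) (i : Fin 3) :
    HasDerivAt (fun s => F (t, Function.update x i s))
      (fderiv ℝ F (t, x) (0, Pi.single i 1)) (x i) := by
  have hline : HasDerivAt (fun s : ℝ => ((t : ℝ), Function.update x i s))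
      ((0 : ℝ), (Pi.single i 1 : V3)) (x i) :=
    (hasDerivAt_const (x i) t).prodMk (hasDerivAt_update x i (x i))
  have hd' : HasFDerivAt F (fderiv ℝ F (t, x)) (t, Function.update x i (x i)) := by
    rw [Function.update_eq_self]; exact hd.hasFDerivAt
  exact hd'.comp_hasDerivAt (x i) hline

lemma pd_eq {F : ℝ × V3 → ℝ} {t : ℝ} {x : V3}
    (hd : DifferentiableAt ℝ F (t, x)) (i : Fin 3) :
    pd i (fun y => F (t, y)) x = Dd (0, Pi.single i 1) F (t, x) :=
  (hasDerivAt_slice_x hd i).deriv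

lemma hasDerivAt_update' (x : V3) (i : Fin 3) :
    HasDerivAt (fun s : ℝ => Function.update x i s) (Pi.single i 1 : V3) (x i) :=
  hasDerivAt_update x i (x i)

lemma pd_eq' {f : V3 → ℝ} {x : V3} (hd : DifferentiableAt ℝ f x) (i : Fin 3) :
    pd i f x = fderiv ℝ f x (Pi.single i 1) := by
  have hd' : HasFDerivAt f (fderiv ℝ f x) (Function.update x i (x i)) := by
    rw [Function.update_eq_self]; exact hd.hasFDerivAt
  exact (hd'.comp_hasDerivAt (x i) (hasDerivAt_update' x i)).deriv

lemma dtd_eq {F : ℝ × V3 → ℝ} {g : ℝ → V3 → ℝ} {t : ℝ} {x : V3}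
    (hg : ∀ s, 0 < s → g s x = F (s, x)) (hd : DifferentiableAt ℝ F (t, x)) (ht : 0 < t) :
    dtd g t x = Dd (1, 0) F (t, x) := by
  have hev : (fun s => g s x) =ᶠ[nhds t] fun s => F (s, x) := by
    filter_upwards [eventually_gt_nhds ht] with s hs using hg s hs
  rw [dtd, hev.deriv_eq]
  exact (hasDerivAt_slice_t hd).deriv

lemma Dd_congr {F G : ℝ × V3 → ℝ} (hFG : ∀ p ∈ posSet, F p = G p) {p} (hp : p ∈ posSet)
    (v : ℝ × V3) : Dd v F p = Dd v G p := by
  have hev : F =ᶠ[nhds p] G :=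
    Filter.eventually_of_mem (isOpen_posSet.mem_nhds hp) hFG
  simp only [Dd, hev.fderiv_eq]

lemma Dd_comm {F : ℝ × V3 → ℝ} (h : ContDiffOn ℝ (⊤:ℕ∞) F posSet) (v w : ℝ × V3) {p}
    (hp : p ∈ posSet) : Dd v (Dd w F) p = Dd w (Dd v F) p := by
  have hsymm : IsSymmSndFDerivAt ℝ F p :=
    (h.contDiffAt (isOpen_posSet.mem_nhds hp)).isSymmSndFDerivAt (by simpa using two_le_itop)
  have hfd : DifferentiableAt ℝ (fderiv ℝ F) p :=
    ((h.fderiv_of_isOpen isOpen_posSet (m := (⊤:ℕ∞)) add_one_le_itop).contDiffAt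
      (isOpen_posSet.mem_nhds hp)).differentiableAt itop_ne_zero
  have key : ∀ u : ℝ × V3, ∀ z : ℝ × V3,
      Dd u (Dd z F) p = fderiv ℝ (fderiv ℝ F) p u z := by
    intro u z
    have : Dd u (Dd z F) p = fderiv ℝ (fun q => fderiv ℝ F q z) p u := rfl
    rw [this, fderiv_clm_apply hfd (differentiableAt_const z)]
    simp
  rw [key v w, key w v]
  exact hsymm v w





lemma pd_periodic {f : V3 → ℝ} (hf : ZPeriodic f) (i : Fin 3) : ZPeriodic (pd i f) := by
  intro x k
  have hfun : (fun s => f (Function.update (x + fun m => (k m : ℝ)) i s))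
      = fun s => f (Function.update x i (s - (k i : ℝ))) := by
    funext s
    have hupdate : Function.update (x + fun m => (k m : ℝ)) i s
        = Function.update x i (s - k i) + fun m => (k m : ℝ) := by
      funext m
      by_cases hm : m = i
      · subst hm; simp
      · simp [Function.update, hm]
    rw [hupdate, hf _ k]
  have hx : (x + fun m => (k m : ℝ)) i = x i + (k i : ℝ) := rfl
  rw [pd, hfun, hx]
  have := deriv_comp_sub_const (f := fun u => f (Function.update x i u))
    (a := (k i : ℝ)) (x := x i + (k i : ℝ))
  simpa [pd] using this

lemma contDiff_slice {F : ℝ × V3 → ℝ} (h : ContDiffOn ℝ (⊤:ℕ∞) F {p : ℝ × V3 | 0 < p.1})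
    {t : ℝ} (ht : 0 < t) : ContDiff ℝ (⊤:ℕ∞) (fun x => F (t, x)) := by
  rw [← contDiffOn_univ]
  exact h.comp ((contDiff_const.prodMk contDiff_id).contDiffOn) fun x _ => ht

lemma pd_continuous {f : V3 → ℝ} (hf : ContDiff ℝ (⊤:ℕ∞) f) (j : Fin 3) :
    Continuous (pd j f) := by
  have heq : (fun x => pd j f x) = fun x => fderiv ℝ f x (Pi.single j 1) := by
    funext x
    exact pd_eq' ((hf.differentiable itop_ne_zero) x) j
  show Continuous fun x => pd j f x
  rw [heq]
  exact (ContinuousLinearMap.apply ℝ ℝ (Pi.single j 1 : V3)).continuous.comp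
    (hf.continuous_fderiv itop_ne_zero)

lemma integral_pd_eq_zero {f : V3 → ℝ} (hf : ContDiff ℝ (⊤:ℕ∞) f) (hper : ZPeriodic f)
    (j : Fin 3) : ∫ x in cube, pd j f x = 0 := by
  classical
  set g : V3 → V3 := fun x m => if m = j then f x else 0 with hg
  set g' : V3 → (V3 →L[ℝ] V3) := fun x =>
    ContinuousLinearMap.pi (fun m => if m = j then fderiv ℝ f x else 0) with hg'
  have hgd : ∀ x : V3, HasFDerivAt g (g' x) x := by
    intro x
    apply hasFDerivAt_pi.2
    intro m
    by_cases hm : m = j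
    · subst hm
      simpa using (hf.differentiable itop_ne_zero x).hasFDerivAt
    · simpa [hg, hg', hm] using hasFDerivAt_const (0 : ℝ) x
  have hdiv : ∀ x : V3, (∑ m : Fin 3, g' x (Pi.single m 1) m) = pd j f x := by
    intro x
    rw [pd_eq' ((hf.differentiable itop_ne_zero) x) j]
    rw [Finset.sum_eq_single j]
    · simp [hg']
    · intro m _ hm
      simp [hg', hm]
    · simp
  have hpd_eq : (fun x => pd j f x) = fun x => fderiv ℝ f x (Pi.single j 1) := by
    funext x
    exact pd_eq' ((hf.differentiable itop_ne_zero) x) j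
  have hcont : Continuous fun x => pd j f x := by
    rw [hpd_eq]
    exact (ContinuousLinearMap.apply ℝ ℝ (Pi.single j 1 : V3)).continuous.comp
      (hf.continuous_fderiv itop_ne_zero)
  have hle : (0 : V3) ≤ 1 := fun _ => zero_le_one
  have hdiv_int : IntegrableOn (fun x => ∑ m : Fin 3, g' x (Pi.single m 1) m)
      (Icc (0 : V3) 1) := by
    refine ContinuousOn.integrableOn_compact isCompact_Icc ?_
    refine Continuous.continuousOn ?_
    have : (fun x => ∑ m : Fin 3, g' x (Pi.single m 1) m) = fun x => pd j f x := by
      funext x; exact hdiv x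
    rw [this]; exact hcont
  have hgc : ContinuousOn g (Icc (0 : V3) 1) := by
    refine Continuous.continuousOn ?_
    refine continuous_pi fun m => ?_
    by_cases hm : m = j
    · subst hm; simpa [hg] using hf.continuous
    · simpa [hg, hm] using continuous_const
  have key := integral_divergence_of_hasFDerivAt_off_countable
    (a := (0 : V3)) (b := (1 : V3)) hle g g' ∅ countable_empty hgc
    (fun x hx => hgd x) hdiv_int
  have hsum : ∀ i : Fin 3,
      ((∫ x in Icc ((0:V3) ∘ Fin.succAbove i) ((1:V3) ∘ Fin.succAbove i),
          g (Fin.insertNth i ((1:V3) i) x) i)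
        - ∫ x in Icc ((0:V3) ∘ Fin.succAbove i) ((1:V3) ∘ Fin.succAbove i),
          g (Fin.insertNth i ((0:V3) i) x) i) = 0 := by
    intro i
    by_cases hij : i = j
    · subst hij
      have hperiodic : ∀ y : Fin 2 → ℝ,
          g (Fin.insertNth i ((1:V3) i) y) i = g (Fin.insertNth i ((0:V3) i) y) i := by
        intro y
        have hins : Fin.insertNth i ((1:V3) i) y
            = Fin.insertNth i ((0:V3) i) y + fun m => ((Pi.single i 1 : Fin 3 → ℤ) m : ℝ) := by
          funext m
          rcases eq_or_ne m i with rfl | hm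
          · simp
          · obtain ⟨l, rfl⟩ := Fin.exists_succAbove_eq hm
            simp [Fin.insertNth_apply_succAbove, Pi.single_eq_of_ne (Fin.succAbove_ne i l)]
        simp only [hg, if_pos rfl, hins]
        rw [hper _ (Pi.single i 1)]
      rw [setIntegral_congr_fun measurableSet_Icc (fun y _ => hperiodic y), sub_self]
    · have hz : ∀ c : ℝ, ∀ y : Fin 2 → ℝ, g (Fin.insertNth i c y) i = 0 := by
        intro c y; simp [hg, hij]
      rw [setIntegral_congr_fun measurableSet_Icc (fun y _ => hz _ y),
        setIntegral_congr_fun measurableSet_Icc (fun y _ => hz _ y), sub_self]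
  have : ∫ x in Icc (0:V3) 1, ∑ m : Fin 3, g' x (Pi.single m 1) m = 0 := by
    rw [key]
    exact Finset.sum_eq_zero fun i _ => hsum i
  calc ∫ x in cube, pd j f x
      = ∫ x in Icc (0:V3) 1, ∑ m : Fin 3, g' x (Pi.single m 1) m := by
        refine setIntegral_congr_fun measurableSet_Icc fun x _ => (hdiv x).symm
    _ = 0 := this


lemma integrableOn_cube {f : V3 → ℝ} (hf : Continuous f) : IntegrableOn f cube := by
  have : IsCompact (Set.Icc (0 : V3) 1) := isCompact_Icc
  exact hf.continuousOn.integrableOn_compact this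

lemma integral_sq_nonneg (f : V3 → ℝ) : 0 ≤ ∫ x in cube, f x ^ 2 :=
  setIntegral_nonneg measurableSet_Icc fun x _ => sq_nonneg _

/-- Cauchy–Schwarz for continuous functions on the cube. -/
lemma integral_mul_le_sqrt_mul_sqrt {f g : V3 → ℝ} (hf : Continuous f) (hg : Continuous g) :
    ∫ x in cube, f x * g x
      ≤ Real.sqrt (∫ x in cube, f x ^ 2) * Real.sqrt (∫ x in cube, g x ^ 2) := by
  set a := ∫ x in cube, f x ^ 2 with ha_def
  set b := ∫ x in cube, f x * g x with hb_def
  set c := ∫ x in cube, g x ^ 2 with hc_def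
  have ha : 0 ≤ a := integral_sq_nonneg f
  have hc : 0 ≤ c := integral_sq_nonneg g
  have hint_f2 : IntegrableOn (fun x => f x ^ 2) cube := integrableOn_cube (by continuity)
  have hint_g2 : IntegrableOn (fun x => g x ^ 2) cube := integrableOn_cube (by continuity)
  have hint_fg : IntegrableOn (fun x => f x * g x) cube := integrableOn_cube (hf.mul hg)
  have quad : ∀ lam : ℝ, 0 ≤ c * (lam * lam) + (2 * b) * lam + a := by
    intro lam
    have h0 : 0 ≤ ∫ x in cube, (f x + lam * g x) ^ 2 :=
      setIntegral_nonneg measurableSet_Icc fun x _ => sq_nonneg _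
    have hexp : ∀ x : V3, (f x + lam * g x) ^ 2
        = g x ^ 2 * (lam * lam) + (2 * (f x * g x)) * lam + f x ^ 2 := by
      intro x; ring
    have e0 : ∫ x in cube, (f x + lam * g x) ^ 2
        = ∫ x in cube, (g x ^ 2 * (lam * lam) + 2 * (f x * g x) * lam + f x ^ 2) := by
      exact setIntegral_congr_fun measurableSet_Icc fun x _ => hexp x
    have e1 : ∫ x in cube, (g x ^ 2 * (lam * lam) + 2 * (f x * g x) * lam + f x ^ 2)
        = (∫ x in cube, (g x ^ 2 * (lam * lam) + 2 * (f x * g x) * lam))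
          + ∫ x in cube, f x ^ 2 :=
      integral_add ((hint_g2.mul_const _).add ((hint_fg.const_mul 2).mul_const _)) hint_f2
    have e2 : ∫ x in cube, (g x ^ 2 * (lam * lam) + 2 * (f x * g x) * lam)
        = (∫ x in cube, g x ^ 2 * (lam * lam)) + ∫ x in cube, 2 * (f x * g x) * lam :=
      integral_add (hint_g2.mul_const _) ((hint_fg.const_mul 2).mul_const _)
    have e3 : ∫ x in cube, g x ^ 2 * (lam * lam) = c * (lam * lam) := integral_mul_const _ _
    have e4 : ∫ x in cube, 2 * (f x * g x) * lam = (2 * b) * lam := by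
      rw [integral_mul_const]
      congr 1
      rw [MeasureTheory.integral_const_mul]
    have : ∫ x in cube, (f x + lam * g x) ^ 2 = c * (lam * lam) + (2 * b) * lam + a := by
      rw [e0, e1, e2, e3, e4]
    linarith [h0, this ▸ h0]
  have hdisc : discrim c (2 * b) a ≤ 0 := discrim_le_zero quad
  rw [discrim] at hdisc
  have hb2 : b ^ 2 ≤ a * c := by nlinarith [hdisc]
  calc b ≤ |b| := le_abs_self b
    _ = Real.sqrt (b ^ 2) := (Real.sqrt_sq_eq_abs b).symm
    _ ≤ Real.sqrt (a * c) := Real.sqrt_le_sqrt hb2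
    _ = Real.sqrt a * Real.sqrt c := Real.sqrt_mul ha c

/-- Differentiation under the integral sign over the cube. -/
lemma hasDerivAt_integral_cube {H : ℝ × V3 → ℝ} (h : ContDiffOn ℝ (⊤:ℕ∞) H posSet) {t : ℝ}
    (ht : 0 < t) :
    HasDerivAt (fun s => ∫ x in cube, H (s, x)) (∫ x in cube, Dd (1, 0) H (t, x)) t := by
  have hDd : ContDiffOn ℝ (⊤:ℕ∞) (Dd (1, 0) H) posSet := contDiffOn_Dd _ h
  have hKc : IsCompact (Set.Icc (t / 2) (3 * t / 2) ×ˢ cube) :=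
    isCompact_Icc.prod isCompact_Icc
  have hKc_sub : Set.Icc (t / 2) (3 * t / 2) ×ˢ cube ⊆ posSet := by
    rintro ⟨s, x⟩ ⟨hs, -⟩
    exact lt_of_lt_of_le (half_pos ht) hs.1
  obtain ⟨C, hC⟩ := hKc.exists_bound_of_continuousOn (hDd.continuousOn.mono hKc_sub)
  have hball : ∀ s ∈ Metric.ball t (t / 2), s ∈ Set.Icc (t / 2) (3 * t / 2) := by
    intro s hs
    rw [Metric.mem_ball, Real.dist_eq, abs_lt] at hs
    constructor <;> linarith
  have hball_pos : ∀ s ∈ Metric.ball t (t / 2), 0 < s := fun s hs =>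
    lt_of_lt_of_le (half_pos ht) (hball s hs).1
  have main := hasDerivAt_integral_of_dominated_loc_of_deriv_le
    (F := fun s x => H (s, x)) (F' := fun s x => Dd (1, 0) H (s, x))
    (μ := volume.restrict cube) (x₀ := t) (bound := fun _ => C)
    (Metric.ball_mem_nhds t (half_pos ht))
    (by
      filter_upwards [eventually_gt_nhds ht] with s hs
      exact ((contDiff_slice h hs).continuous).aestronglyMeasurable)
    (integrableOn_cube (contDiff_slice h ht).continuous)
    ((contDiff_slice hDd ht).continuous).aestronglyMeasurable
    (by
      filter_upwards [ae_restrict_mem measurableSet_Icc] with x hx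
      intro s hs
      exact hC (s, x) ⟨hball s hs, hx⟩)
    (integrableOn_const (isCompact_Icc.measure_lt_top.ne))
    (by
      filter_upwards with x
      intro s hs
      exact hasDerivAt_slice_t (diffAt h (mem_posSet (hball_pos s hs) x)))
  exact main.2

lemma slice_cont {F : ℝ × V3 → ℝ} (h : ContDiffOn ℝ (⊤:ℕ∞) F posSet) {t : ℝ} (ht : 0 < t) :
    Continuous fun x => F (t, x) := (contDiff_slice h ht).continuous

lemma pd_mul {F G : ℝ × V3 → ℝ} {t : ℝ} {x : V3}
    (hF : DifferentiableAt ℝ F (t, x)) (hG : DifferentiableAt ℝ G (t, x)) (j : Fin 3) :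
    pd j (fun y => F (t, y) * G (t, y)) x
      = Dd (0, Pi.single j 1) F (t, x) * G (t, x) + F (t, x) * Dd (0, Pi.single j 1) G (t, x) :=
  by simpa [pd, Dd, Function.update_eq_self] using
    ((hasDerivAt_slice_x hF j).fun_mul (hasDerivAt_slice_x hG j)).deriv

lemma Dd_t_slice_periodic {F : ℝ × V3 → ℝ} (h : ContDiffOn ℝ (⊤:ℕ∞) F posSet)
    (hper : ∀ s : ℝ, 0 < s → ZPeriodic fun x => F (s, x)) {t : ℝ} (ht : 0 < t) :
    ZPeriodic fun x => Dd (1, 0) F (t, x) := by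
  intro x k
  show Dd (1, 0) F (t, x + fun m => (k m : ℝ)) = Dd (1, 0) F (t, x)
  have h1 : Dd (1, 0) F (t, x + fun m => (k m : ℝ))
      = deriv (fun s => F (s, x + fun m => (k m : ℝ))) t :=
    (hasDerivAt_slice_t (diffAt h (mem_posSet ht _))).deriv.symm
  have h2 : Dd (1, 0) F (t, x) = deriv (fun s => F (s, x)) t :=
    (hasDerivAt_slice_t (diffAt h (mem_posSet ht _))).deriv.symm
  rw [h1, h2]
  apply Filter.EventuallyEq.deriv_eq
  filter_upwards [eventually_gt_nhds ht] with s hs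
  exact hper s hs x k

lemma Dd_x_slice_periodic {F : ℝ × V3 → ℝ} (h : ContDiffOn ℝ (⊤:ℕ∞) F posSet)
    (hper : ∀ s : ℝ, 0 < s → ZPeriodic fun x => F (s, x)) {t : ℝ} (ht : 0 < t) (j : Fin 3) :
    ZPeriodic fun x => Dd (0, Pi.single j 1) F (t, x) := by
  have heq : (fun x => Dd (0, Pi.single j 1) F (t, x)) = pd j fun y => F (t, y) :=
    funext fun x => (pd_eq (diffAt h (mem_posSet ht x)) j).symm
  rw [heq]
  exact pd_periodic (hper t ht) j

lemma contDiffOn_rpow_fst (r : ℝ) : ContDiffOn ℝ (⊤:ℕ∞) (fun p : ℝ × V3 => p.1 ^ r) posSet := by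
  intro p hp
  have h1 : ContDiffAt ℝ (⊤:ℕ∞) (fun y : ℝ => y ^ r) p.1 :=
    Real.contDiffAt_rpow_const_of_ne (ne_of_gt hp)
  exact (h1.comp p contDiffAt_fst).contDiffWithinAt

set_option maxHeartbeats 2000000 in
theorem main (γ t₀ : ℝ) (hγ1 : 2 / 3 < γ) (hγ2 : γ < 2) (ht₀ : 0 < t₀)
    (ψ : ℝ → V3 → ℝ)
    (hsmooth : ContDiffOn ℝ (⊤ : ℕ∞) (fun p : ℝ × V3 => ψ p.1 p.2) posSet)
    (hper : ∀ t : ℝ, 0 < t → ZPeriodic (ψ t))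
    (hwave : ∀ t : ℝ, 0 < t → ∀ x : V3,
      dtd (dtd ψ) t x + (2 / γ) * t⁻¹ * dtd ψ t x
        - t ^ (-(4 / (3 * γ))) * ∑ j : Fin 3, pd j (pd j (ψ t)) x = 0)
    (i : Fin 3) (t : ℝ) (ht : 0 < t) (htt₀ : t ≤ t₀) :
    Real.sqrt (∫ x in cube, (pd i (ψ t) x) ^ 2)
      ≤ Real.sqrt (∫ x in cube, (pd i (ψ t₀) x) ^ 2)
        + (t₀ ^ (1 - 2 / γ) - t ^ (1 - 2 / γ)) / (1 - 2 / γ) *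
          Real.sqrt (∫ x in cube,
            (t₀ ^ (4 / γ) * (dtd (fun s => pd i (ψ s)) t₀ x) ^ 2
              + t₀ ^ (8 / (3 * γ)) * ∑ j : Fin 3, (pd j (pd i (ψ t₀)) x) ^ 2)) := by
  have hγ0 : 0 < γ := by linarith
  set Φ : ℝ × V3 → ℝ := fun p => ψ p.1 p.2 with hΦdef
  have hΦ : ContDiffOn ℝ (⊤:ℕ∞) Φ posSet := hsmooth
  set φ : ℝ × V3 → ℝ := Dd (0, Pi.single i 1) Φ with hφdef
  set w : ℝ × V3 → ℝ := Dd (1, 0) φ with hwdef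
  set g : Fin 3 → ℝ × V3 → ℝ := fun j => Dd (0, Pi.single j 1) φ with hgdef
  have hφ : ContDiffOn ℝ (⊤:ℕ∞) φ posSet := contDiffOn_Dd _ hΦ
  have hw : ContDiffOn ℝ (⊤:ℕ∞) w posSet := contDiffOn_Dd _ hφ
  have hg : ∀ j, ContDiffOn ℝ (⊤:ℕ∞) (g j) posSet := fun j => contDiffOn_Dd _ hφ
  -- identification of pd/dtd with Dd
  have hpdψ : ∀ s : ℝ, 0 < s → ∀ x : V3, pd i (ψ s) x = φ (s, x) := fun s hs x =>
    pd_eq (diffAt hΦ (mem_posSet hs x)) i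
  have hpd2 : ∀ s : ℝ, 0 < s → ∀ x : V3, ∀ j, pd j (pd i (ψ s)) x = g j (s, x) := by
    intro s hs x j
    have : pd i (ψ s) = fun y => φ (s, y) := funext fun y => hpdψ s hs y
    rw [this]
    exact pd_eq (diffAt hφ (mem_posSet hs x)) j
  have hdtd_pd : ∀ x : V3, dtd (fun s => pd i (ψ s)) t₀ x = w (t₀, x) := by
    intro x
    exact dtd_eq (fun s hs => hpdψ s hs x) (diffAt hφ (mem_posSet ht₀ x)) ht₀
  -- the wave equation for φ
  have hwaveφ : ∀ s : ℝ, 0 < s → ∀ x : V3,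
      Dd (1, 0) w (s, x) + (2 / γ) * s⁻¹ * w (s, x)
        - s ^ (-(4 / (3 * γ))) * ∑ j : Fin 3, Dd (0, Pi.single j 1) (g j) (s, x) = 0 := by
    intro s hs x
    -- first, the wave equation for Φ in terms of Dd
    have hwaveD : ∀ q : ℝ × V3, q ∈ posSet →
        Dd (1, 0) (Dd (1, 0) Φ) q + (2 / γ) * q.1⁻¹ * Dd (1, 0) Φ q
          - q.1 ^ (-(4 / (3 * γ)))
            * ∑ j : Fin 3, Dd (0, Pi.single j 1) (Dd (0, Pi.single j 1) Φ) q = 0 := by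
      rintro ⟨s, x⟩ hs
      have hs' : (0:ℝ) < s := hs
      have e1 : dtd (dtd ψ) s x = Dd (1, 0) (Dd (1, 0) Φ) (s, x) :=
        dtd_eq (fun u hu => dtd_eq (fun r _ => rfl) (diffAt hΦ (mem_posSet hu x)) hu)
          (diffAt (contDiffOn_Dd _ hΦ) (mem_posSet hs' x)) hs'
      have e2 : dtd ψ s x = Dd (1, 0) Φ (s, x) :=
        dtd_eq (fun u _ => rfl) (diffAt hΦ (mem_posSet hs' x)) hs'
      have e3 : ∀ j : Fin 3, pd j (pd j (ψ s)) x
          = Dd (0, Pi.single j 1) (Dd (0, Pi.single j 1) Φ) (s, x) := by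
        intro j
        have hps : pd j (ψ s) = fun y => Dd (0, Pi.single j 1) Φ (s, y) :=
          funext fun y => pd_eq (diffAt hΦ (mem_posSet hs' y)) j
        rw [hps]
        exact pd_eq (diffAt (contDiffOn_Dd _ hΦ) (mem_posSet hs' x)) j
      have := hwave s hs' x
      rw [e1, e2] at this
      rw [Finset.sum_congr rfl fun j _ => e3 j] at this
      exact this
    -- differentiate the wave equation in the direction xᵢ
    have hmem : (s, x) ∈ posSet := mem_posSet hs x
    have h1 : HasDerivAt (fun r => Dd (1, 0) (Dd (1, 0) Φ) (s, Function.update x i r))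
        (Dd (0, Pi.single i 1) (Dd (1, 0) (Dd (1, 0) Φ)) (s, x)) (x i) :=
      hasDerivAt_slice_x (diffAt (contDiffOn_Dd _ (contDiffOn_Dd _ hΦ)) hmem) i
    have h2 : HasDerivAt (fun r => Dd (1, 0) Φ (s, Function.update x i r))
        (Dd (0, Pi.single i 1) (Dd (1, 0) Φ) (s, x)) (x i) :=
      hasDerivAt_slice_x (diffAt (contDiffOn_Dd _ hΦ) hmem) i
    have h3 : ∀ j : Fin 3, HasDerivAt
        (fun r => Dd (0, Pi.single j 1) (Dd (0, Pi.single j 1) Φ) (s, Function.update x i r))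
        (Dd (0, Pi.single i 1) (Dd (0, Pi.single j 1) (Dd (0, Pi.single j 1) Φ)) (s, x)) (x i) :=
      fun j => hasDerivAt_slice_x
        (diffAt (contDiffOn_Dd _ (contDiffOn_Dd _ hΦ)) hmem) i
    have hcombo : HasDerivAt
        (fun r => Dd (1, 0) (Dd (1, 0) Φ) (s, Function.update x i r)
          + (2 / γ) * s⁻¹ * Dd (1, 0) Φ (s, Function.update x i r)
          - s ^ (-(4 / (3 * γ))) * ∑ j : Fin 3,
              Dd (0, Pi.single j 1) (Dd (0, Pi.single j 1) Φ) (s, Function.update x i r))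
        (Dd (0, Pi.single i 1) (Dd (1, 0) (Dd (1, 0) Φ)) (s, x)
          + (2 / γ) * s⁻¹ * Dd (0, Pi.single i 1) (Dd (1, 0) Φ) (s, x)
          - s ^ (-(4 / (3 * γ))) * ∑ j : Fin 3,
              Dd (0, Pi.single i 1) (Dd (0, Pi.single j 1) (Dd (0, Pi.single j 1) Φ)) (s, x))
        (x i) :=
      (h1.add (h2.const_mul _)).sub
        ((HasDerivAt.fun_sum fun j _ => h3 j).const_mul _)
    have hzero : (fun r => Dd (1, 0) (Dd (1, 0) Φ) (s, Function.update x i r)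
          + (2 / γ) * s⁻¹ * Dd (1, 0) Φ (s, Function.update x i r)
          - s ^ (-(4 / (3 * γ))) * ∑ j : Fin 3,
              Dd (0, Pi.single j 1) (Dd (0, Pi.single j 1) Φ) (s, Function.update x i r))
        = fun _ : ℝ => (0:ℝ) :=
      funext fun r => hwaveD (s, Function.update x i r) (mem_posSet hs _)
    have hDtotal : Dd (0, Pi.single i 1) (Dd (1, 0) (Dd (1, 0) Φ)) (s, x)
          + (2 / γ) * s⁻¹ * Dd (0, Pi.single i 1) (Dd (1, 0) Φ) (s, x)
          - s ^ (-(4 / (3 * γ))) * ∑ j : Fin 3,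
              Dd (0, Pi.single i 1) (Dd (0, Pi.single j 1) (Dd (0, Pi.single j 1) Φ)) (s, x)
        = 0 := by
      have hc := hcombo
      rw [hzero] at hc
      exact hc.unique (hasDerivAt_const _ 0)
    -- commute derivatives
    have T1 : Dd (0, Pi.single i 1) (Dd (1, 0) (Dd (1, 0) Φ)) (s, x) = Dd (1, 0) w (s, x) := by
      have a1 := Dd_comm (contDiffOn_Dd ((1:ℝ), (0:V3)) hΦ) (0, Pi.single i 1) (1, 0) hmem
      have a2 : Dd (1, 0) (Dd (0, Pi.single i 1) (Dd (1, 0) Φ)) (s, x)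
          = Dd (1, 0) (Dd (1, 0) φ) (s, x) :=
        Dd_congr (fun q hq => Dd_comm hΦ (0, Pi.single i 1) (1, 0) hq) hmem _
      rw [a1, a2]
    have T2 : Dd (0, Pi.single i 1) (Dd (1, 0) Φ) (s, x) = w (s, x) :=
      Dd_comm hΦ (0, Pi.single i 1) (1, 0) hmem
    have T3 : ∀ j : Fin 3,
        Dd (0, Pi.single i 1) (Dd (0, Pi.single j 1) (Dd (0, Pi.single j 1) Φ)) (s, x)
          = Dd (0, Pi.single j 1) (g j) (s, x) := by
      intro j
      have b1 := Dd_comm (contDiffOn_Dd ((0:ℝ), Pi.single j 1) hΦ)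
        (0, Pi.single i 1) (0, Pi.single j 1) hmem
      have b2 : Dd (0, Pi.single j 1) (Dd (0, Pi.single i 1) (Dd (0, Pi.single j 1) Φ)) (s, x)
          = Dd (0, Pi.single j 1) (Dd (0, Pi.single j 1) φ) (s, x) :=
        Dd_congr (fun q hq => Dd_comm hΦ (0, Pi.single i 1) (0, Pi.single j 1) hq) hmem _
      rw [b1, b2]
    rw [T1, T2] at hDtotal
    rw [Finset.sum_congr rfl fun j _ => T3 j] at hDtotal
    exact hDtotal
  -- commutation of time and space derivatives of φ
  have hcomm : ∀ s : ℝ, 0 < s → ∀ x : V3, ∀ j,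
      Dd (1, 0) (g j) (s, x) = Dd (0, Pi.single j 1) w (s, x) := fun s hs x j =>
    Dd_comm hφ _ _ (mem_posSet hs x)
  -- periodicity of the slices
  have hφper : ∀ s : ℝ, 0 < s → ZPeriodic fun x => φ (s, x) := by
    intro s hs
    have : (fun x => φ (s, x)) = pd i (ψ s) := funext fun x => (hpdψ s hs x).symm
    rw [this]; exact pd_periodic (hper s hs) i
  have hwper : ∀ s : ℝ, 0 < s → ZPeriodic fun x => w (s, x) := fun s hs =>
    Dd_t_slice_periodic hφ hφper hs
  have hgper : ∀ j, ∀ s : ℝ, 0 < s → ZPeriodic fun x => g j (s, x) := fun j s hs =>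
    Dd_x_slice_periodic hφ hφper hs j
  -- the energies
  set HK : ℝ × V3 → ℝ := fun p => (φ p) ^ 2 with hHKdef
  set H : ℝ × V3 → ℝ := fun p =>
    p.1 ^ (4 / γ) * (w p) ^ 2 + p.1 ^ (8 / (3 * γ)) * ∑ j : Fin 3, (g j p) ^ 2 with hHdef
  have hHK : ContDiffOn ℝ (⊤:ℕ∞) HK posSet := hφ.pow 2
  have hH : ContDiffOn ℝ (⊤:ℕ∞) H posSet := by
    refine ContDiffOn.add (ContDiffOn.mul (contDiffOn_rpow_fst _) (hw.pow 2)) ?_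
    refine ContDiffOn.mul (contDiffOn_rpow_fst _) ?_
    exact ContDiffOn.sum fun j _ => (hg j).pow 2
  set K : ℝ → ℝ := fun s => ∫ x in cube, HK (s, x) with hKdef
  set En : ℝ → ℝ := fun s => ∫ x in cube, H (s, x) with hEndef
  -- derivative of K
  have hKderiv : ∀ s : ℝ, 0 < s →
      HasDerivAt K (∫ x in cube, 2 * φ (s, x) * w (s, x)) s := by
    intro s hs
    have h0 := hasDerivAt_integral_cube hHK hs
    have heq : ∀ x : V3, Dd (1, 0) HK (s, x) = 2 * φ (s, x) * w (s, x) := by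
      intro x
      have hl : HasDerivAt (fun u => HK (u, x)) (Dd (1, 0) HK (s, x)) s :=
        hasDerivAt_slice_t (diffAt hHK (mem_posSet hs x))
      have hr : HasDerivAt (fun u => (φ (u, x)) ^ 2)
          ((2 : ℕ) * (φ (s, x)) ^ 1 * Dd (1, 0) φ (s, x)) s :=
        (hasDerivAt_slice_t (diffAt hφ (mem_posSet hs x))).pow 2
      have huniq := hl.unique hr
      rw [huniq, ← hwdef]
      push_cast
      ring
    have hcong : (∫ x in cube, 2 * φ (s, x) * w (s, x))
        = ∫ x in cube, Dd (1, 0) HK (s, x) :=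
      setIntegral_congr_fun measurableSet_Icc fun x _ => (heq x).symm
    rw [hcong]
    exact h0
  -- continuity of the summed gradient squares
  have hgsum_cont : ∀ s : ℝ, 0 < s →
      Continuous fun x : V3 => ∑ j : Fin 3, (g j (s, x)) ^ 2 := by
    intro s hs
    exact continuous_finset_sum _ fun j _ => (slice_cont (hg j) hs).pow 2
  -- derivative of the energy
  have hEnderiv : ∀ s : ℝ, 0 < s → HasDerivAt En
      ((8 / (3 * γ)) * s ^ (8 / (3 * γ) - 1)
        * ∫ x in cube, ∑ j : Fin 3, (g j (s, x)) ^ 2) s := by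
    intro s hs
    have h0 := hasDerivAt_integral_cube hH hs
    have hprod_smooth : ∀ j : Fin 3, ContDiff ℝ (⊤:ℕ∞) fun y => w (s, y) * g j (s, y) :=
      fun j => (contDiff_slice hw hs).mul (contDiff_slice (hg j) hs)
    have hprod_per : ∀ j : Fin 3, ZPeriodic fun y => w (s, y) * g j (s, y) := fun j x k => by
      simpa using congrArg₂ (· * ·) (hwper s hs x k) (hgper j s hs x k)
    have heq : ∀ x : V3, Dd (1, 0) H (s, x)
        = (8 / (3 * γ)) * s ^ (8 / (3 * γ) - 1) * (∑ j : Fin 3, (g j (s, x)) ^ 2)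
          + 2 * s ^ (8 / (3 * γ))
            * ∑ j : Fin 3, pd j (fun y => w (s, y) * g j (s, y)) x := by
      intro x
      have hmem : (s, x) ∈ posSet := mem_posSet hs x
      have hc1 : HasDerivAt (fun u : ℝ => u ^ (4 / γ)) ((4 / γ) * s ^ (4 / γ - 1)) s :=
        Real.hasDerivAt_rpow_const (Or.inl hs.ne')
      have hc2 : HasDerivAt (fun u : ℝ => u ^ (8 / (3 * γ)))
          ((8 / (3 * γ)) * s ^ (8 / (3 * γ) - 1)) s :=
        Real.hasDerivAt_rpow_const (Or.inl hs.ne')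
      have hwt : HasDerivAt (fun u => w (u, x)) (Dd (1, 0) w (s, x)) s :=
        hasDerivAt_slice_t (diffAt hw hmem)
      have hgt : ∀ j : Fin 3, HasDerivAt (fun u => g j (u, x)) (Dd (1, 0) (g j) (s, x)) s :=
        fun j => hasDerivAt_slice_t (diffAt (hg j) hmem)
      have hr : HasDerivAt (fun u => H (u, x))
          ((4 / γ) * s ^ (4 / γ - 1) * (w (s, x)) ^ 2
            + s ^ (4 / γ) * ((2 : ℕ) * (w (s, x)) ^ 1 * Dd (1, 0) w (s, x))
            + ((8 / (3 * γ)) * s ^ (8 / (3 * γ) - 1) * (∑ j : Fin 3, (g j (s, x)) ^ 2)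
              + s ^ (8 / (3 * γ))
                * ∑ j : Fin 3, (2 : ℕ) * (g j (s, x)) ^ 1 * Dd (1, 0) (g j) (s, x))) s :=
        (hc1.fun_mul (hwt.fun_pow 2)).fun_add (hc2.fun_mul (HasDerivAt.fun_sum fun j _ => (hgt j).fun_pow 2))
      have hl : HasDerivAt (fun u => H (u, x)) (Dd (1, 0) H (s, x)) s :=
        hasDerivAt_slice_t (diffAt hH hmem)
      have hval := hl.unique hr
      have hDdw : Dd (1, 0) w (s, x)
          = s ^ (-(4 / (3 * γ))) * (∑ j : Fin 3, Dd (0, Pi.single j 1) (g j) (s, x))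
            - (2 / γ) * s⁻¹ * w (s, x) := by
        have := hwaveφ s hs x; linarith
      have hpdj : ∀ j : Fin 3, pd j (fun y => w (s, y) * g j (s, y)) x
          = Dd (0, Pi.single j 1) w (s, x) * g j (s, x)
            + w (s, x) * Dd (0, Pi.single j 1) (g j) (s, x) :=
        fun j => pd_mul (diffAt hw hmem) (diffAt (hg j) hmem) j
      have hrpow1 : s ^ (4 / γ - 1) = s ^ (4 / γ) * s⁻¹ := by
        rw [Real.rpow_sub_one hs.ne']; ring
      have hrpow2 : s ^ (4 / γ) * s ^ (-(4 / (3 * γ))) = s ^ (8 / (3 * γ)) := by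
        rw [← Real.rpow_add hs]
        congr 1
        field_simp
        ring
      rw [hval, hDdw]
      simp only [hcomm s hs x, hpdj, pow_one, Nat.cast_ofNat]
      have hsum1 : ∑ j : Fin 3, (2:ℝ) * g j (s, x) * Dd (0, Pi.single j 1) w (s, x)
          = 2 * ∑ j : Fin 3, Dd (0, Pi.single j 1) w (s, x) * g j (s, x) := by
        rw [Finset.mul_sum]
        exact Finset.sum_congr rfl fun j _ => by ring
      have hsum2 : ∑ j : Fin 3, (Dd (0, Pi.single j 1) w (s, x) * g j (s, x)
            + w (s, x) * Dd (0, Pi.single j 1) (g j) (s, x))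
          = (∑ j : Fin 3, Dd (0, Pi.single j 1) w (s, x) * g j (s, x))
            + w (s, x) * ∑ j : Fin 3, Dd (0, Pi.single j 1) (g j) (s, x) := by
        rw [Finset.sum_add_distrib, Finset.mul_sum]
      rw [hsum1, hsum2]
      linear_combination (2 * w (s, x) * ∑ j : Fin 3, Dd (0, Pi.single j 1) (g j) (s, x)) * hrpow2
        + ((4 / γ) * (w (s, x)) ^ 2) * hrpow1
    have hint1 : IntegrableOn (fun x : V3 =>
        (8 / (3 * γ)) * s ^ (8 / (3 * γ) - 1) * ∑ j : Fin 3, (g j (s, x)) ^ 2) cube :=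
      integrableOn_cube (continuous_const.mul (hgsum_cont s hs))
    have hint2 : IntegrableOn (fun x : V3 => 2 * s ^ (8 / (3 * γ))
        * ∑ j : Fin 3, pd j (fun y => w (s, y) * g j (s, y)) x) cube :=
      integrableOn_cube (continuous_const.mul (continuous_finset_sum _ fun j _ =>
        pd_continuous (hprod_smooth j) j))
    have hE'eq : (∫ x in cube, Dd (1, 0) H (s, x))
        = (8 / (3 * γ)) * s ^ (8 / (3 * γ) - 1)
          * ∫ x in cube, ∑ j : Fin 3, (g j (s, x)) ^ 2 := by
      have hcongr : (∫ x in cube, Dd (1, 0) H (s, x))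
          = ∫ x in cube, ((8 / (3 * γ)) * s ^ (8 / (3 * γ) - 1)
              * (∑ j : Fin 3, (g j (s, x)) ^ 2)
            + 2 * s ^ (8 / (3 * γ))
              * ∑ j : Fin 3, pd j (fun y => w (s, y) * g j (s, y)) x) :=
        setIntegral_congr_fun measurableSet_Icc fun x _ => heq x
      rw [hcongr]
      rw [integral_add hint1 hint2, MeasureTheory.integral_const_mul,
        MeasureTheory.integral_const_mul]
      have hzero : ∫ x in cube, ∑ j : Fin 3, pd j (fun y => w (s, y) * g j (s, y)) x = 0 := by
        rw [integral_finset_sum _ fun j _ =>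
          integrableOn_cube (pd_continuous (hprod_smooth j) j)]
        rw [Finset.sum_congr rfl fun j _ =>
          integral_pd_eq_zero (hprod_smooth j) (hprod_per j) j]
        simp
      rw [hzero, mul_zero, add_zero]
    rw [← hE'eq]
    exact h0
  -- energy inequality: En is monotone, hence En s ≤ En t₀
  have hEnmono : ∀ s : ℝ, 0 < s → s ≤ t₀ → En s ≤ En t₀ := by
    have hmono : MonotoneOn En (Ioi (0:ℝ)) := by
      apply monotoneOn_of_deriv_nonneg (convex_Ioi 0)
      · intro s hs
        exact (hEnderiv s hs).continuousAt.continuousWithinAt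
      · intro s hs
        rw [interior_Ioi] at hs
        exact (hEnderiv s hs).differentiableAt.differentiableWithinAt
      · intro s hs
        rw [interior_Ioi] at hs
        rw [(hEnderiv s hs).deriv]
        refine mul_nonneg (mul_nonneg ?_ ?_) ?_
        · positivity
        · exact Real.rpow_nonneg hs.le _
        · exact setIntegral_nonneg measurableSet_Icc fun x _ =>
            Finset.sum_nonneg fun j _ => sq_nonneg _
    intro s hs hst
    exact hmono (mem_Ioi.2 hs) (mem_Ioi.2 ht₀) hst
  -- En t₀ is nonnegative, and controls the L² norm of w
  have hEnt₀ : 0 ≤ En t₀ := by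
    refine setIntegral_nonneg measurableSet_Icc fun x _ => ?_
    have h1 : (0:ℝ) ≤ t₀ ^ (4 / γ) := Real.rpow_nonneg ht₀.le _
    have h2 : (0:ℝ) ≤ t₀ ^ (8 / (3 * γ)) := Real.rpow_nonneg ht₀.le _
    have h3 : (0:ℝ) ≤ ∑ j : Fin 3, (g j (t₀, x)) ^ 2 :=
      Finset.sum_nonneg fun j _ => sq_nonneg _
    positivity
  have hwL2 : ∀ s : ℝ, 0 < s → s ≤ t₀ →
      ∫ x in cube, (w (s, x)) ^ 2 ≤ s ^ (-(4 / γ)) * En t₀ := by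
    intro s hs hst
    have hsplit : En s = s ^ (4 / γ) * (∫ x in cube, (w (s, x)) ^ 2)
        + s ^ (8 / (3 * γ)) * ∫ x in cube, ∑ j : Fin 3, (g j (s, x)) ^ 2 := by
      have h1 : IntegrableOn (fun x : V3 => s ^ (4 / γ) * (w (s, x)) ^ 2) cube :=
        integrableOn_cube (continuous_const.mul ((slice_cont hw hs).pow 2))
      have h2 : IntegrableOn (fun x : V3 =>
          s ^ (8 / (3 * γ)) * ∑ j : Fin 3, (g j (s, x)) ^ 2) cube :=
        integrableOn_cube (continuous_const.mul (hgsum_cont s hs))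
      calc En s = ∫ x in cube, (s ^ (4 / γ) * (w (s, x)) ^ 2
          + s ^ (8 / (3 * γ)) * ∑ j : Fin 3, (g j (s, x)) ^ 2) := rfl
        _ = _ := by
          rw [integral_add h1 h2, MeasureTheory.integral_const_mul,
            MeasureTheory.integral_const_mul]
    have hgr : 0 ≤ s ^ (8 / (3 * γ)) * ∫ x in cube, ∑ j : Fin 3, (g j (s, x)) ^ 2 :=
      mul_nonneg (Real.rpow_nonneg hs.le _)
        (setIntegral_nonneg measurableSet_Icc fun x _ =>
          Finset.sum_nonneg fun j _ => sq_nonneg _)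
    have h3 : s ^ (4 / γ) * (∫ x in cube, (w (s, x)) ^ 2) ≤ En t₀ := by
      have := hEnmono s hs hst
      linarith [hsplit ▸ this]
    have hpow : (0:ℝ) < s ^ (4 / γ) := Real.rpow_pos_of_pos hs _
    have hfin : (∫ x in cube, (w (s, x)) ^ 2) ≤ (s ^ (4 / γ))⁻¹ * En t₀ := by
      have hmul := mul_le_mul_of_nonneg_left h3 (inv_nonneg.2 hpow.le)
      rwa [inv_mul_cancel_left₀ hpow.ne'] at hmul
    rw [Real.rpow_neg hs.le]
    exact hfin
  -- nonnegativity of K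
  have hKnonneg : ∀ s : ℝ, 0 ≤ K s := fun s =>
    setIntegral_nonneg measurableSet_Icc fun x _ => sq_nonneg _
  have h2γ : 1 - 2 / γ < 0 := by
    have h1 : 1 < 2 / γ := (one_lt_div hγ0).2 (by linarith)
    linarith
  have h2γ' : (1 - 2 / γ) ≠ 0 := ne_of_lt h2γ
  set E₀ := En t₀ with hE₀def
  set c := (t₀ ^ (1 - 2 / γ) - t ^ (1 - 2 / γ)) / (1 - 2 / γ) with hcdef
  -- rewrite the goal in terms of K and E₀
  have hgoalL : (∫ x in cube, (pd i (ψ t) x) ^ 2) = K t :=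
    setIntegral_congr_fun measurableSet_Icc fun x _ => by rw [hpdψ t ht x]
  have hgoalL₀ : (∫ x in cube, (pd i (ψ t₀) x) ^ 2) = K t₀ :=
    setIntegral_congr_fun measurableSet_Icc fun x _ => by rw [hpdψ t₀ ht₀ x]
  have hgoalR : (∫ x in cube,
      (t₀ ^ (4 / γ) * (dtd (fun s => pd i (ψ s)) t₀ x) ^ 2
        + t₀ ^ (8 / (3 * γ)) * ∑ j : Fin 3, (pd j (pd i (ψ t₀)) x) ^ 2)) = E₀ :=
    setIntegral_congr_fun measurableSet_Icc fun x _ => by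
      rw [hdtd_pd x,
        Finset.sum_congr rfl fun j (_ : j ∈ Finset.univ) =>
          congrArg (fun z : ℝ => z ^ 2) (hpd2 t₀ ht₀ x j)]
  rw [hgoalL, hgoalL₀, hgoalR]
  -- main ε-estimate
  have key : ∀ ε : ℝ, 0 < ε →
      Real.sqrt (K t) ≤ Real.sqrt (K t₀) + ε + c * Real.sqrt E₀ := by
    intro ε hε
    set u : ℝ → ℝ := fun s => Real.sqrt (K s + ε ^ 2) with hudef
    set A : ℝ → ℝ := fun s => Real.sqrt E₀ * s ^ (1 - 2 / γ) / (1 - 2 / γ) with hAdef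
    have hu : ∀ s : ℝ, 0 < s → HasDerivAt u
        ((∫ x in cube, 2 * φ (s, x) * w (s, x)) / (2 * Real.sqrt (K s + ε ^ 2))) s := by
      intro s hs
      have hne : K s + ε ^ 2 ≠ 0 := by
        have := hKnonneg s; positivity
      exact ((hKderiv s hs).add_const (ε ^ 2)).sqrt hne
    have hA : ∀ s : ℝ, 0 < s → HasDerivAt A (Real.sqrt E₀ * s ^ (-(2 / γ))) s := by
      intro s hs
      have h1 : HasDerivAt (fun v : ℝ => v ^ (1 - 2 / γ))
          ((1 - 2 / γ) * s ^ (1 - 2 / γ - 1)) s :=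
        Real.hasDerivAt_rpow_const (Or.inl hs.ne')
      have h2 := (h1.const_mul (Real.sqrt E₀)).div_const (1 - 2 / γ)
      refine h2.congr_deriv ?_
      symm
      rw [show (1 - 2 / γ - 1) = -(2 / γ) by ring, eq_div_iff h2γ']
      ring
    have hubound : ∀ s : ℝ, 0 < s → s ≤ t₀ →
        -(Real.sqrt E₀ * s ^ (-(2 / γ)))
          ≤ (∫ x in cube, 2 * φ (s, x) * w (s, x)) / (2 * Real.sqrt (K s + ε ^ 2)) := by
      intro s hs hst
      have hKpos : (0:ℝ) < K s + ε ^ 2 := by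
        have := hKnonneg s; positivity
      have hsqpos : 0 < Real.sqrt (K s + ε ^ 2) := Real.sqrt_pos.2 hKpos
      have hKA : (∫ x in cube, (-(φ (s, x))) ^ 2) = K s :=
        setIntegral_congr_fun measurableSet_Icc fun x _ => by rw [neg_sq]
      have hCS : ∫ x in cube, (-(φ (s, x))) * w (s, x)
          ≤ Real.sqrt (∫ x in cube, (-(φ (s, x))) ^ 2)
            * Real.sqrt (∫ x in cube, (w (s, x)) ^ 2) :=
        integral_mul_le_sqrt_mul_sqrt (slice_cont hφ hs).neg (slice_cont hw hs)
      have hwb : Real.sqrt (∫ x in cube, (w (s, x)) ^ 2)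
          ≤ s ^ (-(2 / γ)) * Real.sqrt E₀ := by
        have h1 := Real.sqrt_le_sqrt (hwL2 s hs hst)
        rw [Real.sqrt_mul (Real.rpow_nonneg hs.le _)] at h1
        have h3 : Real.sqrt (s ^ (-(4 / γ))) = s ^ (-(2 / γ)) := by
          rw [Real.sqrt_eq_rpow, ← Real.rpow_mul hs.le]
          congr 1
          ring
        rw [h3] at h1
        exact h1
      have hsqKle : Real.sqrt (∫ x in cube, (-(φ (s, x))) ^ 2)
          ≤ Real.sqrt (K s + ε ^ 2) := by
        rw [hKA]
        exact Real.sqrt_le_sqrt (le_add_of_nonneg_right (sq_nonneg ε))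
      have hIneg : -(∫ x in cube, 2 * φ (s, x) * w (s, x))
          = 2 * ∫ x in cube, (-(φ (s, x))) * w (s, x) := by
        rw [show (fun x : V3 => (-(φ (s, x))) * w (s, x))
            = fun x : V3 => -(φ (s, x) * w (s, x)) from funext fun x => by ring]
        rw [integral_neg]
        rw [show (fun x : V3 => 2 * φ (s, x) * w (s, x))
            = fun x : V3 => 2 * (φ (s, x) * w (s, x)) from funext fun x => by ring]
        rw [MeasureTheory.integral_const_mul]
        ring
      have hb : Real.sqrt (∫ x in cube, (-(φ (s, x))) ^ 2)
            * Real.sqrt (∫ x in cube, (w (s, x)) ^ 2)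
          ≤ Real.sqrt (K s + ε ^ 2) * (s ^ (-(2 / γ)) * Real.sqrt E₀) :=
        mul_le_mul hsqKle hwb (Real.sqrt_nonneg _) (Real.sqrt_nonneg _)
      have hCS2 : -(∫ x in cube, 2 * φ (s, x) * w (s, x))
          ≤ 2 * Real.sqrt (K s + ε ^ 2) * (Real.sqrt E₀ * s ^ (-(2 / γ))) := by
        have h' := hCS.trans hb
        have hcommute : Real.sqrt (K s + ε ^ 2) * (s ^ (-(2 / γ)) * Real.sqrt E₀)
            = Real.sqrt (K s + ε ^ 2) * (Real.sqrt E₀ * s ^ (-(2 / γ))) := by ring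
        rw [hIneg]
        linarith [h', hcommute.symm ▸ h']
      rw [le_div_iff₀ (by positivity : (0:ℝ) < 2 * Real.sqrt (K s + ε ^ 2))]
      nlinarith [hCS2]
    set W : ℝ → ℝ := fun s => u s + A s with hWdef
    have hWmono : MonotoneOn W (Ioc (0:ℝ) t₀) := by
      apply monotoneOn_of_deriv_nonneg (convex_Ioc 0 t₀)
      · intro s hs
        exact ((hu s hs.1).add (hA s hs.1)).continuousAt.continuousWithinAt
      · intro s hs
        rw [interior_Ioc] at hs
        exact ((hu s hs.1).add (hA s hs.1)).differentiableAt.differentiableWithinAt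
      · intro s hs
        rw [interior_Ioc] at hs
        rw [((hu s hs.1).fun_add (hA s hs.1)).deriv]
        have := hubound s hs.1 hs.2.le
        linarith
    have hWle : u t + A t ≤ u t₀ + A t₀ :=
      hWmono ⟨ht, htt₀⟩ ⟨ht₀, le_refl _⟩ htt₀
    have hAt : A t₀ - A t = c * Real.sqrt E₀ := by
      show Real.sqrt E₀ * t₀ ^ (1 - 2 / γ) / (1 - 2 / γ)
          - Real.sqrt E₀ * t ^ (1 - 2 / γ) / (1 - 2 / γ) = c * Real.sqrt E₀
      rw [hcdef]
      field_simp
    have h1 : Real.sqrt (K t) ≤ u t :=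
      Real.sqrt_le_sqrt (le_add_of_nonneg_right (sq_nonneg ε))
    have h2 : u t₀ ≤ Real.sqrt (K t₀) + ε := by
      have hsq : K t₀ + ε ^ 2 ≤ (Real.sqrt (K t₀) + ε) ^ 2 := by
        have hss := Real.sq_sqrt (hKnonneg t₀)
        nlinarith [Real.sqrt_nonneg (K t₀), hε.le]
      calc u t₀ = Real.sqrt (K t₀ + ε ^ 2) := rfl
        _ ≤ Real.sqrt ((Real.sqrt (K t₀) + ε) ^ 2) := Real.sqrt_le_sqrt hsq
        _ = Real.sqrt (K t₀) + ε := Real.sqrt_sq (by positivity)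
    calc Real.sqrt (K t) ≤ u t := h1
      _ ≤ u t₀ + (A t₀ - A t) := by linarith [hWle]
      _ ≤ Real.sqrt (K t₀) + ε + c * Real.sqrt E₀ := by
          rw [hAt]; linarith [h2]
  by_contra hcon
  push_neg at hcon
  have hδ : 0 < (Real.sqrt (K t) - (Real.sqrt (K t₀) + c * Real.sqrt E₀)) / 2 := by linarith
  have hk := key _ hδ
  linarith


end FLRWaux

/-- **Lemma 1 (FLRW).** `L²` estimate for the spatial derivatives `∂_{x_i}ψ`. -/
theorem flrw_L2_estimate
    (γ t₀ : ℝ) (hγ1 : 2 / 3 < γ) (hγ2 : γ < 2) (ht₀ : 0 < t₀)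
    (ψ : ℝ → (Fin 3 → ℝ) → ℝ)
    (hsmooth : SmoothOnPos ψ)
    (hper : ∀ t : ℝ, 0 < t → ZPeriodic (ψ t))
    (hwave : FLRWwave γ ψ) :
    ∀ i : Fin 3, ∀ t ∈ Set.Ioc (0 : ℝ) t₀,
      Real.sqrt (∫ x in cube, (pd i (ψ t) x) ^ 2)
        ≤ Real.sqrt (∫ x in cube, (pd i (ψ t₀) x) ^ 2)
          + (t₀ ^ (1 - 2 / γ) - t ^ (1 - 2 / γ)) / (1 - 2 / γ) *
            Real.sqrt (∫ x in cube,
              (t₀ ^ (4 / γ) * (dtd (fun s => pd i (ψ s)) t₀ x) ^ 2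
                + t₀ ^ (8 / (3 * γ)) * ∑ j : Fin 3, (pd j (pd i (ψ t₀)) x) ^ 2)) := by
  intro i t htmem
  exact FLRWaux.main γ t₀ hγ1 hγ2 ht₀ ψ hsmooth hper hwave i t htmem.1 htmem.2
end
end
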